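/- arXiv:2511.21259 — 3 statements merged into one kernel-verified Lean document; each statement's English description precedes it below -/
import Mathlib

section
/- For each i ∈ {0,1,2}, the operation ⋄_i on F₃, defined by f ⋄_i g = φ_{α_i(f)}(g) · f where α_i(f) = iᵐ is the maximal all-i leaf address of the reduced domain tree of f, makes F₃ a monoid with identity the identity element of F₃. -/
open Set
open scoped Classical

noncomputable section

/-- An address: a finite word in the alphabet `{0,1,2}`. -/
abbrev Address : Type := List (Fin 3)

/-- Left endpoint of the triadic interval `I_α`. -/
def addrLeft : Address → ℝ
  | [] => 0
  | i :: α => ((i : ℕ) : ℝ) / 3 + addrLeft α / 3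

/-- Length of the triadic interval `I_α`. -/
def addrLen (α : Address) : ℝ := (1 / 3 : ℝ) ^ α.length

/-- The triadic subinterval `I_α ⊆ [0,1]` determined by the address `α`. -/
def Iaddr (α : Address) : Set ℝ := Set.Icc (addrLeft α) (addrLeft α + addrLen α)

/-- The linear orientation-preserving isomorphism `ψ_α : I_α → [0,1]`. -/
def psi (α : Address) (t : ℝ) : ℝ := (t - addrLeft α) / addrLen α

/-- The inverse `ψ_α⁻¹ : [0,1] → I_α`. -/
def psiInv (α : Address) (t : ℝ) : ℝ := addrLeft α + addrLen α * t

/-- `φ_α(f)` acts as `ψ_α⁻¹ ∘ f ∘ ψ_α` on `I_α` and as the identity elsewhere. -/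
def phi (α : Address) (f : ℝ → ℝ) : ℝ → ℝ :=
  fun t => if t ∈ Iaddr α then psiInv α (f (psi α t)) else t

/-- A triadic rational. -/
def IsTriadic (q : ℝ) : Prop := ∃ a : ℤ, ∃ n : ℕ, q = (a : ℝ) / 3 ^ n

/-- Membership in the Brown–Thompson group `F₃`, realized as piecewise-linear
homeomorphisms of `[0,1]` (extended by the identity to all of `ℝ`) with breakpoints
at triadic rationals and slopes powers of `3`. The group product is `f·g = g ∘ f`. -/
def IsF3 (f : ℝ → ℝ) : Prop :=
  (∀ t, t ∉ Set.Icc (0 : ℝ) 1 → f t = t) ∧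
  Set.BijOn f (Set.Icc 0 1) (Set.Icc 0 1) ∧
  StrictMonoOn f (Set.Icc 0 1) ∧
  ∃ breaks : Finset ℝ, (∀ b ∈ breaks, IsTriadic b) ∧
    ∀ x ∈ Set.Icc (0 : ℝ) 1, x ∉ breaks →
      ∃ (k : ℤ) (c : ℝ), IsTriadic c ∧
        ∀ᶠ y in nhdsWithin x (Set.Icc 0 1), f y = (3 : ℝ) ^ k * y + c

/-- `f` maps `I_α` linearly (preserving orientation, with triadic affine data)
onto the triadic interval `I_β`. -/
def IsTriadicLinearOn (f : ℝ → ℝ) (α β : Address) : Prop :=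
  ∀ t ∈ Iaddr α, f t = psiInv β (psi α t)

/-- The depth of the maximal all-`i` leaf of the reduced domain tree of `f`:
the least `n` such that `f` maps `I_{iⁿ}` linearly onto a triadic interval. -/
def leafExp (i : Fin 3) (f : ℝ → ℝ) : ℕ :=
  sInf {n : ℕ | ∃ β : Address, IsTriadicLinearOn f (List.replicate n i) β}

/-- The address `l(f) = 1ⁿ` of the central leaf of `f` (the leaf of the reduced
domain tree whose interval contains `1/2`). -/
def centralLeaf (f : ℝ → ℝ) : Address := List.replicate (leafExp 1 f) 1

/-- The central monoid operation `f ⋄ g = φ_{l(f)}(g) · f` (recall `a·b = b ∘ a`). -/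
def diam (f g : ℝ → ℝ) : ℝ → ℝ := fun t => f (phi (centralLeaf f) g t)

/-- `f ⋄_i g = φ_{α_i(f)}(g) · f`, where `α_i(f) = iᵐ` is the maximal all-`i`
leaf address of the reduced domain tree of `f`. -/
def diamI (i : Fin 3) (f g : ℝ → ℝ) : ℝ → ℝ :=
  fun t => f (phi (List.replicate (leafExp i f) i) g t)


/-! ### Basic lemmas -/

lemma addrLen_pos (α : Address) : 0 < addrLen α := by
  unfold addrLen; positivity

lemma addrLen_ne (α : Address) : addrLen α ≠ 0 := (addrLen_pos α).ne'

lemma addrLen_le_one (α : Address) : addrLen α ≤ 1 := by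
  unfold addrLen
  exact pow_le_one₀ (by norm_num) (by norm_num)

lemma psiInv_psi (α : Address) (t : ℝ) : psiInv α (psi α t) = t := by
  unfold psiInv psi
  field_simp [addrLen_ne α]
  ring

lemma psi_psiInv (α : Address) (t : ℝ) : psi α (psiInv α t) = t := by
  unfold psiInv psi
  field_simp [addrLen_ne α]
  ring

lemma mem_Iaddr_iff {α : Address} {t : ℝ} : t ∈ Iaddr α ↔ psi α t ∈ Set.Icc (0:ℝ) 1 := by
  unfold Iaddr psi
  rw [Set.mem_Icc, Set.mem_Icc]
  rw [le_div_iff₀ (addrLen_pos α), div_le_one (addrLen_pos α)]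
  constructor <;> intro h <;> constructor <;> linarith [h.1, h.2]

lemma psiInv_mem_Iaddr {α : Address} {t : ℝ} (h : t ∈ Set.Icc (0:ℝ) 1) :
    psiInv α t ∈ Iaddr α := by
  rw [mem_Iaddr_iff, psi_psiInv]; exact h

lemma addrLeft_nonneg (α : Address) : 0 ≤ addrLeft α := by
  induction α with
  | nil => simp [addrLeft]
  | cons d α ih => unfold addrLeft; positivity

lemma addrLeft_add_len_le_one (α : Address) : addrLeft α + addrLen α ≤ 1 := by
  induction α with
  | nil => simp [addrLeft, addrLen]
  | cons d α ih =>
    unfold addrLeft addrLen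
    have hd : ((d : ℕ) : ℝ) ≤ 2 := by
      have := d.is_lt
      have : (d : ℕ) ≤ 2 := by omega
      exact_mod_cast this
    have : addrLeft α + addrLen α ≤ 1 := ih
    unfold addrLen at this
    simp only [List.length_cons, pow_succ]
    nlinarith

lemma Iaddr_subset (α : Address) : Iaddr α ⊆ Set.Icc (0:ℝ) 1 := by
  intro t ht
  rcases ht with ⟨h1, h2⟩
  constructor
  · linarith [addrLeft_nonneg α]
  · linarith [addrLeft_add_len_le_one α]

lemma addrLeft_append (α β : Address) :
    addrLeft (α ++ β) = addrLeft α + addrLen α * addrLeft β := by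
  induction α with
  | nil => simp [addrLeft, addrLen]
  | cons d α ih =>
    simp only [List.cons_append, addrLeft]
    rw [ih]
    unfold addrLen
    simp only [List.length_cons, pow_succ]
    ring

lemma addrLen_append (α β : Address) : addrLen (α ++ β) = addrLen α * addrLen β := by
  unfold addrLen
  rw [List.length_append, pow_add]

lemma psi_append (α β : Address) (t : ℝ) : psi (α ++ β) t = psi β (psi α t) := by
  unfold psi
  rw [addrLeft_append, addrLen_append]
  rw [eq_div_iff (addrLen_ne β), div_sub' (addrLen_ne α), div_mul_eq_mul_div,
    div_eq_div_iff (mul_ne_zero (addrLen_ne α) (addrLen_ne β)) (addrLen_ne α)]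
  ring

lemma psiInv_append (α β : Address) (t : ℝ) :
    psiInv (α ++ β) t = psiInv α (psiInv β t) := by
  unfold psiInv
  rw [addrLeft_append, addrLen_append]
  ring

lemma mem_Iaddr_append {α β : Address} {t : ℝ} :
    t ∈ Iaddr (α ++ β) ↔ psi α t ∈ Iaddr β := by
  rw [mem_Iaddr_iff, mem_Iaddr_iff (α := β), psi_append]

lemma Iaddr_append_subset (α β : Address) : Iaddr (α ++ β) ⊆ Iaddr α := by
  intro t ht
  rw [mem_Iaddr_append] at ht
  rw [mem_Iaddr_iff]
  exact Iaddr_subset β ht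

lemma addrLeft_eq_nat (α : Address) : ∃ b : ℕ, addrLeft α = (b : ℝ) / 3 ^ α.length := by
  induction α with
  | nil => exact ⟨0, by simp [addrLeft]⟩
  | cons d α ih =>
    obtain ⟨b, hb⟩ := ih
    refine ⟨(d : ℕ) * 3 ^ α.length + b, ?_⟩
    unfold addrLeft
    rw [hb]
    simp only [List.length_cons, pow_succ]
    push_cast
    have h3 : (3:ℝ) ^ α.length ≠ 0 := by positivity
    field_simp

lemma addrLen_eq_zpow (α : Address) : addrLen α = (3:ℝ) ^ (-(α.length : ℤ)) := by
  unfold addrLen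
  rw [zpow_neg, zpow_natCast, one_div, inv_pow]


/-! ### Building an address from digits -/

/-- The address of length `l` whose left endpoint is `j / 3^l`. -/
def toAddr : ℕ → ℕ → Address
  | 0, _ => []
  | l + 1, j => (⟨j / 3 ^ l % 3, Nat.mod_lt _ (by norm_num)⟩ : Fin 3) :: toAddr l (j % 3 ^ l)

lemma length_toAddr (l : ℕ) : ∀ j, (toAddr l j).length = l := by
  induction l with
  | zero => intro j; rfl
  | succ l ih => intro j; simp [toAddr, ih]

lemma addrLeft_toAddr (l : ℕ) : ∀ j : ℕ, j < 3 ^ l →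
    addrLeft (toAddr l j) = (j : ℝ) / 3 ^ l := by
  induction l with
  | zero =>
    intro j hj
    have : j = 0 := by omega
    subst this
    simp [toAddr, addrLeft]
  | succ l ih =>
    intro j hj
    have h3 : 0 < 3 ^ l := by positivity
    have hq : j / 3 ^ l < 3 := Nat.div_lt_of_lt_mul (by rw [pow_succ] at hj; omega)
    have hmod : j / 3 ^ l % 3 = j / 3 ^ l := Nat.mod_eq_of_lt hq
    have hr : j % 3 ^ l < 3 ^ l := Nat.mod_lt _ h3
    have key := Nat.div_add_mod j (3 ^ l)
    simp only [toAddr, addrLeft, hmod, ih _ hr]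
    have hcast : (j : ℝ) = 3 ^ l * (j / 3 ^ l : ℕ) + (j % 3 ^ l : ℕ) := by
      exact_mod_cast key.symm
    rw [hcast, pow_succ]
    have : (3:ℝ) ^ l ≠ 0 := by positivity
    field_simp

/-! ### Triadic lemmas -/

lemma isTriadic_add {x y : ℝ} (hx : IsTriadic x) (hy : IsTriadic y) : IsTriadic (x + y) := by
  obtain ⟨a, n, rfl⟩ := hx
  obtain ⟨b, m, rfl⟩ := hy
  refine ⟨a * 3 ^ m + b * 3 ^ n, n + m, ?_⟩
  have h1 : (3:ℝ) ^ n ≠ 0 := by positivity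
  have h2 : (3:ℝ) ^ m ≠ 0 := by positivity
  push_cast
  rw [div_add_div _ _ h1 h2, pow_add]
  ring

lemma isTriadic_mul {x y : ℝ} (hx : IsTriadic x) (hy : IsTriadic y) : IsTriadic (x * y) := by
  obtain ⟨a, n, rfl⟩ := hx
  obtain ⟨b, m, rfl⟩ := hy
  refine ⟨a * b, n + m, ?_⟩
  push_cast
  rw [div_mul_div_comm, pow_add]

lemma isTriadic_neg {x : ℝ} (hx : IsTriadic x) : IsTriadic (-x) := by
  obtain ⟨a, n, rfl⟩ := hx
  exact ⟨-a, n, by push_cast; ring⟩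

lemma isTriadic_zpow (k : ℤ) : IsTriadic ((3:ℝ) ^ k) := by
  rcases le_or_gt 0 k with h | h
  · refine ⟨3 ^ k.toNat, 0, ?_⟩
    push_cast
    rw [← zpow_natCast, Int.toNat_of_nonneg h]
    simp
  · refine ⟨1, (-k).toNat, ?_⟩
    push_cast
    rw [eq_div_iff (by positivity), ← zpow_natCast, Int.toNat_of_nonneg (by omega),
      ← zpow_add₀ (by norm_num : (3:ℝ) ≠ 0)]
    simp

lemma isTriadic_addrLeft (α : Address) : IsTriadic (addrLeft α) := by
  obtain ⟨b, hb⟩ := addrLeft_eq_nat α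
  exact ⟨b, α.length, by rw [hb]; push_cast; ring⟩

lemma isTriadic_addrLen (α : Address) : IsTriadic (addrLen α) := by
  rw [addrLen_eq_zpow]; exact isTriadic_zpow _

/-! ### F₃ basics -/

lemma IsF3.mapsTo {f : ℝ → ℝ} (hf : IsF3 f) :
    Set.MapsTo f (Set.Icc (0:ℝ) 1) (Set.Icc (0:ℝ) 1) := hf.2.1.1

lemma IsF3.fix0 {f : ℝ → ℝ} (hf : IsF3 f) : f 0 = 0 := by
  have h0 : (0:ℝ) ∈ Set.Icc (0:ℝ) 1 := by norm_num
  obtain ⟨x, hx, hfx⟩ := hf.2.1.2.2 h0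
  rcases eq_or_lt_of_le hx.1 with h | h
  · rw [← h] at hfx; rw [hfx]
  · have := hf.2.2.1 h0 hx h
    rw [hfx] at this
    have := (hf.mapsTo h0).1
    linarith

lemma IsF3.fix1 {f : ℝ → ℝ} (hf : IsF3 f) : f 1 = 1 := by
  have h1 : (1:ℝ) ∈ Set.Icc (0:ℝ) 1 := by norm_num
  obtain ⟨x, hx, hfx⟩ := hf.2.1.2.2 h1
  rcases eq_or_lt_of_le hx.2 with h | h
  · rw [h] at hfx; rw [hfx]
  · have := hf.2.2.1 hx h1 h
    rw [hfx] at this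
    have := (hf.mapsTo h1).2
    linarith

lemma IsF3.injective {f : ℝ → ℝ} (hf : IsF3 f) : Function.Injective f := by
  intro a b hab
  by_cases ha : a ∈ Set.Icc (0:ℝ) 1 <;> by_cases hb : b ∈ Set.Icc (0:ℝ) 1
  · exact hf.2.1.2.1 ha hb hab
  · exfalso; rw [hf.1 b hb] at hab
    exact hb (hab ▸ hf.mapsTo ha)
  · exfalso; rw [hf.1 a ha] at hab
    exact ha (hab ▸ hf.mapsTo hb)
  · rw [hf.1 a ha, hf.1 b hb] at hab; exact hab

lemma isF3_id : IsF3 (fun t : ℝ => t) := by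
  refine ⟨fun t _ => rfl, ⟨fun t ht => ht, fun a _ b _ h => h, fun y hy => ⟨y, hy, rfl⟩⟩,
    fun a _ b _ h => h, ∅, by simp, fun x hx _ => ⟨0, 0, ⟨0, 0, by norm_num⟩, ?_⟩⟩
  filter_upwards with y
  norm_num

/-! ### phi lemmas -/

lemma phi_id (α : Address) : phi α (fun t => t) = fun t => t := by
  funext t
  unfold phi
  split
  · exact psiInv_psi α t
  · rfl

lemma Iaddr_nil : Iaddr ([] : Address) = Set.Icc (0:ℝ) 1 := by
  unfold Iaddr addrLeft addrLen
  norm_num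

lemma phi_nil {g : ℝ → ℝ} (hg : IsF3 g) : phi [] g = g := by
  funext t
  unfold phi
  rw [Iaddr_nil]
  split
  · unfold psiInv psi addrLeft addrLen
    norm_num
  · exact (hg.1 t (by assumption)).symm

lemma phi_comp (α : Address) (g q : ℝ → ℝ) (hq : ∀ s ∈ Set.Icc (0:ℝ) 1, q s ∈ Set.Icc (0:ℝ) 1) :
    phi α (fun t => g (q t)) = fun t => phi α g (phi α q t) := by
  funext t
  by_cases ht : t ∈ Iaddr α
  · have h1 : psi α t ∈ Set.Icc (0:ℝ) 1 := mem_Iaddr_iff.1 ht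
    have h2 : psiInv α (q (psi α t)) ∈ Iaddr α := psiInv_mem_Iaddr (hq _ h1)
    simp only [phi, if_pos ht, if_pos h2, psi_psiInv]
  · simp only [phi, if_neg ht]

lemma phi_append (α β : Address) (h : ℝ → ℝ) :
    phi α (phi β h) = phi (α ++ β) h := by
  funext t
  by_cases ht : t ∈ Iaddr α
  · by_cases ht2 : psi α t ∈ Iaddr β
    · have : t ∈ Iaddr (α ++ β) := mem_Iaddr_append.2 ht2
      simp only [phi, if_pos ht, if_pos ht2, if_pos this, psiInv_append, psi_append]
    · have : t ∉ Iaddr (α ++ β) := fun h => ht2 (mem_Iaddr_append.1 h)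
      simp only [phi, if_pos ht, if_neg ht2, if_neg this, psiInv_psi]
  · have h2 : t ∉ Iaddr (α ++ β) := fun h => ht (Iaddr_append_subset α β h)
    simp only [phi, if_neg ht, if_neg h2]

lemma IsTriadicLinearOn.append {f : ℝ → ℝ} {α β : Address}
    (h : IsTriadicLinearOn f α β) (γ : Address) : IsTriadicLinearOn f (α ++ γ) (β ++ γ) := by
  intro t ht
  rw [h t (Iaddr_append_subset α γ ht), psiInv_append, psi_append, psiInv_psi]


/-! ### phi preserves F₃ -/

lemma phi_mem_Iaddr {α : Address} {g : ℝ → ℝ} (hg : IsF3 g) {t : ℝ} (ht : t ∈ Iaddr α) :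
    phi α g t ∈ Iaddr α := by
  rw [phi, if_pos ht]
  exact psiInv_mem_Iaddr (hg.mapsTo (mem_Iaddr_iff.1 ht))

lemma phi_not_mem {α : Address} (g : ℝ → ℝ) {t : ℝ} (ht : t ∉ Iaddr α) :
    phi α g t = t := by rw [phi, if_neg ht]

lemma psi_continuous (α : Address) : Continuous (psi α) := by
  unfold psi
  exact (continuous_id.sub continuous_const).div_const _

lemma phi_strictMonoOn {α : Address} {g : ℝ → ℝ} (hg : IsF3 g) :
    StrictMonoOn (phi α g) (Set.Icc (0:ℝ) 1) := by
  intro a ha b hb hab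
  have hlen := addrLen_pos α
  by_cases haI : a ∈ Iaddr α <;> by_cases hbI : b ∈ Iaddr α
  · rw [phi, if_pos haI, phi, if_pos hbI]
    unfold psiInv
    have h1 : psi α a < psi α b := by
      unfold psi
      apply div_lt_div_of_pos_right _ hlen
      linarith
    have h2 : g (psi α a) < g (psi α b) :=
      hg.2.2.1 (mem_Iaddr_iff.1 haI) (mem_Iaddr_iff.1 hbI) h1
    nlinarith
  · have hbR : addrLeft α + addrLen α < b := by
      rcases not_and_or.1 hbI with h | h
      · exfalso; exact h (le_trans haI.1 hab.le)
      · exact lt_of_not_ge h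
    have := (phi_mem_Iaddr hg haI).2
    rw [phi_not_mem g hbI]
    linarith
  · have haL : a < addrLeft α := by
      rcases not_and_or.1 haI with h | h
      · exact lt_of_not_ge h
      · exfalso; exact h (le_trans hab.le hbI.2)
    have := (phi_mem_Iaddr hg hbI).1
    rw [phi_not_mem g haI]
    linarith
  · rw [phi_not_mem g haI, phi_not_mem g hbI]; exact hab

lemma phi_isF3 {α : Address} {g : ℝ → ℝ} (hg : IsF3 g) : IsF3 (phi α g) := by
  have hlen := addrLen_pos α
  refine ⟨?_, ⟨?_, ?_, ?_⟩, phi_strictMonoOn hg, ?_⟩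
  · intro t ht
    exact phi_not_mem g (fun h => ht (Iaddr_subset α h))
  · -- MapsTo
    intro t ht
    by_cases htI : t ∈ Iaddr α
    · exact Iaddr_subset α (phi_mem_Iaddr hg htI)
    · rw [phi_not_mem g htI]; exact ht
  · -- InjOn
    exact (phi_strictMonoOn hg).injOn
  · -- SurjOn
    intro y hy
    by_cases hyI : y ∈ Iaddr α
    · obtain ⟨x, hx, hgx⟩ := hg.2.1.2.2 (mem_Iaddr_iff.1 hyI)
      refine ⟨psiInv α x, Iaddr_subset α (psiInv_mem_Iaddr hx), ?_⟩
      rw [phi, if_pos (psiInv_mem_Iaddr hx), psi_psiInv, hgx]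
      exact psiInv_psi α y
    · exact ⟨y, hy, phi_not_mem g hyI⟩
  · -- breaks
    obtain ⟨B, hBt, hB⟩ := hg.2.2.2
    classical
    refine ⟨B.image (psiInv α) ∪ {addrLeft α, addrLeft α + addrLen α}, ?_, ?_⟩
    · intro b hb
      simp only [Finset.mem_union, Finset.mem_image, Finset.mem_insert, Finset.mem_singleton] at hb
      rcases hb with ⟨b', hb', rfl⟩ | rfl | rfl
      · exact isTriadic_add (isTriadic_addrLeft α) (isTriadic_mul (isTriadic_addrLen α) (hBt _ hb'))
      · exact isTriadic_addrLeft α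
      · exact isTriadic_add (isTriadic_addrLeft α) (isTriadic_addrLen α)
    · intro x hx hxbrk
      simp only [Finset.mem_union, Finset.mem_image, Finset.mem_insert, Finset.mem_singleton,
        not_or, not_exists, not_and] at hxbrk
      obtain ⟨hximg, hxL, hxR⟩ := hxbrk
      by_cases hxI : x ∈ Iaddr α
      · have hxo : x ∈ Set.Ioo (addrLeft α) (addrLeft α + addrLen α) :=
          ⟨lt_of_le_of_ne hxI.1 (Ne.symm hxL), lt_of_le_of_ne hxI.2 hxR⟩
        have hψ : psi α x ∈ Set.Icc (0:ℝ) 1 := mem_Iaddr_iff.1 hxI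
        have hψb : psi α x ∉ B := by
          intro h
          exact hximg _ h (psiInv_psi α x)
        obtain ⟨k, c, hc, hev⟩ := hB _ hψ hψb
        refine ⟨k, addrLeft α - 3 ^ k * addrLeft α + addrLen α * c,
          isTriadic_add (isTriadic_add (isTriadic_addrLeft α)
            (isTriadic_neg (isTriadic_mul (isTriadic_zpow k) (isTriadic_addrLeft α))))
            (isTriadic_mul (isTriadic_addrLen α) hc), ?_⟩
        have hIoo : Set.Ioo (addrLeft α) (addrLeft α + addrLen α) ∈
            nhdsWithin x (Set.Icc (0:ℝ) 1) :=
          mem_nhdsWithin_of_mem_nhds (Ioo_mem_nhds hxo.1 hxo.2)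
        have htend : Filter.Tendsto (psi α) (nhdsWithin x (Set.Icc (0:ℝ) 1))
            (nhdsWithin (psi α x) (Set.Icc (0:ℝ) 1)) := by
          rw [tendsto_nhdsWithin_iff]
          constructor
          · exact ((psi_continuous α).tendsto x).mono_left nhdsWithin_le_nhds
          · filter_upwards [hIoo] with t ht
            exact mem_Iaddr_iff.1 (Set.Ioo_subset_Icc_self ht)
        filter_upwards [hIoo, htend.eventually hev] with t ht hgt
        have htI : t ∈ Iaddr α := Set.Ioo_subset_Icc_self ht
        rw [phi, if_pos htI, hgt]
        unfold psiInv psi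
        field_simp
        ring
      · refine ⟨0, 0, ⟨0, 0, by norm_num⟩, ?_⟩
        have hop : (Iaddr α)ᶜ ∈ nhds x :=
          (isClosed_Icc.isOpen_compl).mem_nhds hxI
        filter_upwards [mem_nhdsWithin_of_mem_nhds hop] with t ht
        rw [phi_not_mem g ht]
        norm_num


/-! ### Composition preserves F₃ -/

lemma comp_isF3 {p f : ℝ → ℝ} (hp : IsF3 p) (hf : IsF3 f) : IsF3 (fun t => f (p t)) := by
  classical
  refine ⟨?_, ?_, ?_, ?_⟩
  · intro t ht
    show f (p t) = t
    rw [hp.1 t ht, hf.1 t ht]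
  · exact hf.2.1.comp hp.2.1
  · exact hf.2.2.1.comp hp.2.2.1 hp.mapsTo
  · obtain ⟨Bp, hBpt, hBp⟩ := hp.2.2.2
    obtain ⟨Bf, hBft, hBf⟩ := hf.2.2.2
    have hfin : (p ⁻¹' (Bf : Set ℝ)).Finite :=
      Set.Finite.preimage hp.injective.injOn Bf.finite_toSet
    refine ⟨Bp ∪ hfin.toFinset, ?_, ?_⟩
    · intro b hb
      rcases Finset.mem_union.1 hb with hb | hb
      · exact hBpt b hb
      · have hpb : p b ∈ Bf := by simpa using hb
        by_cases hbI : b ∈ Set.Icc (0:ℝ) 1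
        · by_cases hbBp : b ∈ Bp
          · exact hBpt b hbBp
          · obtain ⟨k, c, hc, hev⟩ := hBp b hbI hbBp
            have heq : p b = 3 ^ k * b + c := hev.self_of_nhdsWithin hbI
            have h3 : (3:ℝ) ^ k ≠ 0 := by positivity
            have : b = 3 ^ (-k) * p b + 3 ^ (-k) * (-c) := by
              rw [heq, zpow_neg]
              field_simp
              ring
            rw [this]
            exact isTriadic_add (isTriadic_mul (isTriadic_zpow _) (hBft _ hpb))
              (isTriadic_mul (isTriadic_zpow _) (isTriadic_neg hc))
        · have : p b = b := hp.1 b hbI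
          rw [← this]
          exact hBft _ hpb
    · intro x hx hxbrk
      rw [Finset.mem_union, not_or] at hxbrk
      obtain ⟨hxBp, hxpre⟩ := hxbrk
      have hpxB : p x ∉ Bf := by
        intro h
        exact hxpre (by simpa using h)
      obtain ⟨k, c, hc, hev⟩ := hBp x hx hxBp
      have hpx : p x ∈ Set.Icc (0:ℝ) 1 := hp.mapsTo hx
      obtain ⟨k', c', hc', hev'⟩ := hBf (p x) hpx hpxB
      refine ⟨k' + k, 3 ^ k' * c + c',
        isTriadic_add (isTriadic_mul (isTriadic_zpow _) hc) hc', ?_⟩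
      have hx_eq : (3:ℝ) ^ k * x + c = p x := (hev.self_of_nhdsWithin hx).symm
      have htends : Filter.Tendsto p (nhdsWithin x (Set.Icc (0:ℝ) 1))
          (nhdsWithin (p x) (Set.Icc (0:ℝ) 1)) := by
        rw [tendsto_nhdsWithin_iff]
        constructor
        · have hcont : Filter.Tendsto (fun y => (3:ℝ) ^ k * y + c)
              (nhdsWithin x (Set.Icc (0:ℝ) 1)) (nhds ((3:ℝ) ^ k * x + c)) :=
            (((continuous_const.mul continuous_id).add continuous_const).tendsto x).mono_left
              nhdsWithin_le_nhds
          rw [hx_eq] at hcont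
          exact Filter.Tendsto.congr' (by filter_upwards [hev] with y hy; exact hy.symm) hcont
        · filter_upwards [self_mem_nhdsWithin] with y hy
          exact hp.mapsTo hy
      filter_upwards [hev, htends.eventually hev'] with y h1 h2
      rw [h2, h1, zpow_add₀ (by norm_num : (3:ℝ) ≠ 0)]
      ring


/-! ### Gluing locally affine pieces -/

/-- Points where `f` is eventually equal to `A·y + B`. -/
def evSet (f : ℝ → ℝ) (A B : ℝ) : Set ℝ := {x | ∀ᶠ y in nhds x, f y = A * y + B}

lemma isOpen_evSet (f : ℝ → ℝ) (A B : ℝ) : IsOpen (evSet f A B) := by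
  have : evSet f A B = interior {y | f y = A * y + B} := by
    ext x
    rw [mem_interior_iff_mem_nhds]
    rfl
  rw [this]
  exact isOpen_interior

lemma evSet_unique {f : ℝ → ℝ} {A B A' B' x : ℝ} (h1 : x ∈ evSet f A B)
    (h2 : x ∈ evSet f A' B') : A = A' ∧ B = B' := by
  have h := h1.and h2
  rw [Metric.eventually_nhds_iff] at h
  obtain ⟨ε, hε, hy⟩ := h
  have e1 := hy (y := x) (by simp [hε])
  have e2 := hy (y := x + ε / 2) (by
    rw [Real.dist_eq, show x + ε / 2 - x = ε / 2 by ring, abs_of_pos (by linarith)]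
    linarith)
  have q1 : A * x + B = A' * x + B' := e1.1.symm.trans e1.2
  have q2 : A * (x + ε / 2) + B = A' * (x + ε / 2) + B' := e2.1.symm.trans e2.2
  have hA : A = A' := by
    have : (A - A') * (ε / 2) = 0 := by linarith
    rcases mul_eq_zero.1 this with h | h
    · linarith
    · linarith
  exact ⟨hA, by rw [hA] at q1; linarith⟩

lemma glue_affine {f : ℝ → ℝ} {u v : ℝ} (huv : u < v)
    (H : ∀ x ∈ Set.Ioo u v, ∃ k : ℤ, ∃ c : ℝ, IsTriadic c ∧
      ∀ᶠ y in nhds x, f y = (3:ℝ) ^ k * y + c) :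
    ∃ k : ℤ, ∃ c : ℝ, IsTriadic c ∧ ∀ y ∈ Set.Ioo u v, f y = (3:ℝ) ^ k * y + c := by
  classical
  have hx0 : (u + v) / 2 ∈ Set.Ioo u v := ⟨by linarith, by linarith⟩
  obtain ⟨k, c, hc, hev⟩ := H _ hx0
  refine ⟨k, c, hc, ?_⟩
  by_contra hcon
  push_neg at hcon
  obtain ⟨x1, hx1, hx1ne⟩ := hcon
  set U := evSet f ((3:ℝ) ^ k) c with hU
  set V := ⋃ (p : ℝ × ℝ) (_ : p ≠ ((3:ℝ) ^ k, c)), evSet f p.1 p.2 with hV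
  have hVopen : IsOpen V := isOpen_iUnion fun p => isOpen_iUnion fun _ => isOpen_evSet f p.1 p.2
  have hcover : Set.Ioo u v ⊆ U ∪ V := by
    intro x hx
    obtain ⟨k', c', _, hev'⟩ := H x hx
    by_cases hpq : (((3:ℝ) ^ k' : ℝ), c') = (((3:ℝ) ^ k : ℝ), c)
    · left
      have h1 : ((3:ℝ) ^ k' : ℝ) = (3:ℝ) ^ k := congrArg Prod.fst hpq
      have h2 : c' = c := congrArg Prod.snd hpq
      rw [hU]
      show ∀ᶠ y in nhds x, f y = (3:ℝ) ^ k * y + c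
      rw [← h1, ← h2]
      exact hev'
    · right
      rw [hV]
      exact Set.mem_iUnion.2 ⟨(((3:ℝ) ^ k' : ℝ), c'), Set.mem_iUnion.2 ⟨hpq, hev'⟩⟩
  have hx1V : x1 ∈ V := by
    rcases hcover hx1 with h | h
    · exact absurd (h.self_of_nhds) hx1ne
    · exact h
  obtain ⟨z, hz⟩ := (isPreconnected_Ioo : IsPreconnected (Set.Ioo u v)) U V
    (isOpen_evSet f _ _) hVopen hcover ⟨(u + v) / 2, hx0, hev⟩ ⟨x1, hx1, hx1V⟩
  obtain ⟨-, hzU, hzV⟩ := hz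
  rw [hV] at hzV
  obtain ⟨p, hp⟩ := Set.mem_iUnion.1 hzV
  obtain ⟨hpne, hpz⟩ := Set.mem_iUnion.1 hp
  obtain ⟨hA, hB⟩ := evSet_unique hzU hpz
  exact hpne (Prod.ext hA.symm hB.symm)

/-- Extending an affine formula from the open interval to its endpoints. -/
lemma affine_endpoints {f : ℝ → ℝ} (hf : IsF3 f) {u v A B : ℝ} (hA : 0 < A) (huv : u < v)
    (hu : u ∈ Set.Icc (0:ℝ) 1) (hv : v ∈ Set.Icc (0:ℝ) 1)
    (hform : ∀ y ∈ Set.Ioo u v, f y = A * y + B) :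
    ∀ y ∈ Set.Icc u v, f y = A * y + B := by
  have hIooIcc : Set.Ioo u v ⊆ Set.Icc (0:ℝ) 1 := fun y hy =>
    ⟨le_trans hu.1 hy.1.le, le_trans hy.2.le hv.2⟩
  have hmid : (u + v) / 2 ∈ Set.Ioo u v := ⟨by linarith, by linarith⟩
  have hfu_mem : f u ∈ Set.Icc (0:ℝ) 1 := hf.mapsTo hu
  have hfv_mem : f v ∈ Set.Icc (0:ℝ) 1 := hf.mapsTo hv
  have hfmid : f ((u + v) / 2) = A * ((u + v) / 2) + B := hform _ hmid
  have hfmid_mem : f ((u + v) / 2) ∈ Set.Icc (0:ℝ) 1 := hf.mapsTo (hIooIcc hmid)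
  -- f u ≤ A u + B
  have hfu_le : f u ≤ A * u + B := by
    by_contra h
    push_neg at h
    obtain ⟨M, hM0, hM1, hM2⟩ : ∃ M : ℝ, 0 < M ∧ M ≤ (v - u) / 2 ∧
        A * M ≤ (f u - (A * u + B)) / 2 := by
      refine ⟨min ((v - u) / 2) ((f u - (A * u + B)) / (2 * A)),
        lt_min (by linarith) (div_pos (by linarith) (by linarith)), min_le_left _ _, ?_⟩
      have hmin : min ((v - u) / 2) ((f u - (A * u + B)) / (2 * A)) ≤
          (f u - (A * u + B)) / (2 * A) := min_le_right _ _
      have heq : A * ((f u - (A * u + B)) / (2 * A)) = (f u - (A * u + B)) / 2 := by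
        field_simp
      nlinarith [mul_le_mul_of_nonneg_left hmin hA.le]
    have htmem : u + M ∈ Set.Ioo u v := ⟨by linarith, by linarith⟩
    have h1 : f u < f (u + M) := hf.2.2.1 hu (hIooIcc htmem) (by linarith)
    have h2 : f (u + M) = A * (u + M) + B := hform _ htmem
    nlinarith
  -- A u + B ≤ f u
  have hfu_ge : A * u + B ≤ f u := by
    by_contra h
    push_neg at h
    set w := (f u + (A * u + B)) / 2 with hws
    have hw1 : f u < w := by rw [hws]; linarith
    have hw2 : w < A * u + B := by rw [hws]; linarith
    have hwmem : w ∈ Set.Icc (0:ℝ) 1 := by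
      constructor
      · linarith [hfu_mem.1]
      · have : A * u + B < A * ((u + v) / 2) + B := by nlinarith [hmid.1]
        linarith [hfmid_mem.2, hfmid]
    obtain ⟨s, hs, hfs⟩ := hf.2.1.2.2 hwmem
    rcases lt_trichotomy s u with hsu | hsu | hsu
    · have : f s < f u := hf.2.2.1 hs hu hsu
      linarith [hfs]
    · rw [hsu] at hfs; linarith
    · rcases lt_or_ge s v with hsv | hsv
      · have : f s = A * s + B := hform _ ⟨hsu, hsv⟩
        nlinarith
      · have hgt : (u + v) / 2 < s := by linarith [hmid.2]
        have : f ((u + v) / 2) < f s := hf.2.2.1 (hIooIcc hmid) hs hgt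
        nlinarith [hmid.1]
  have hfu : f u = A * u + B := le_antisymm hfu_le hfu_ge
  -- A v + B ≤ f v
  have hfv_ge : A * v + B ≤ f v := by
    by_contra h
    push_neg at h
    obtain ⟨M, hM0, hM1, hM2⟩ : ∃ M : ℝ, 0 < M ∧ M ≤ (v - u) / 2 ∧
        A * M ≤ (A * v + B - f v) / 2 := by
      refine ⟨min ((v - u) / 2) ((A * v + B - f v) / (2 * A)),
        lt_min (by linarith) (div_pos (by linarith) (by linarith)), min_le_left _ _, ?_⟩
      have hmin : min ((v - u) / 2) ((A * v + B - f v) / (2 * A)) ≤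
          (A * v + B - f v) / (2 * A) := min_le_right _ _
      have heq : A * ((A * v + B - f v) / (2 * A)) = (A * v + B - f v) / 2 := by
        field_simp
      nlinarith [mul_le_mul_of_nonneg_left hmin hA.le]
    have htmem : v - M ∈ Set.Ioo u v := ⟨by linarith, by linarith⟩
    have h1 : f (v - M) < f v := hf.2.2.1 (hIooIcc htmem) hv (by linarith)
    have h2 : f (v - M) = A * (v - M) + B := hform _ htmem
    nlinarith
  have hfv_le : f v ≤ A * v + B := by
    by_contra h
    push_neg at h
    set w := (A * v + B + f v) / 2 with hws
    have hw1 : w < f v := by rw [hws]; linarith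
    have hw2 : A * v + B < w := by rw [hws]; linarith
    have hwmem : w ∈ Set.Icc (0:ℝ) 1 := by
      constructor
      · have : A * ((u + v) / 2) + B < A * v + B := by nlinarith [hmid.2]
        linarith [hfmid_mem.1, hfmid]
      · linarith [hfv_mem.2]
    obtain ⟨s, hs, hfs⟩ := hf.2.1.2.2 hwmem
    rcases lt_trichotomy s v with hsv | hsv | hsv
    · rcases le_or_gt s u with hsu | hsu
      · rcases eq_or_lt_of_le hsu with h' | h'
        · rw [h'] at hfs; rw [hfu] at hfs; nlinarith
        · have : f s < f u := hf.2.2.1 hs hu h'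
          rw [hfu] at this; nlinarith
      · have : f s = A * s + B := hform _ ⟨hsu, hsv⟩
        nlinarith
    · rw [hsv] at hfs; linarith
    · have : f v < f s := hf.2.2.1 hv hs hsv
      linarith
  have hfv : f v = A * v + B := le_antisymm hfv_le hfv_ge
  intro y hy
  rcases eq_or_lt_of_le hy.1 with h | h
  · rw [← h]; exact hfu
  · rcases eq_or_lt_of_le hy.2 with h' | h'
    · rw [h']; exact hfv
    · exact hform _ ⟨h, h'⟩


/-! ### Finding a break-free triadic interval -/

lemma half_not_triadic : ¬ IsTriadic (1/2 : ℝ) := by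
  rintro ⟨a, n, h⟩
  have h3 : (3:ℝ) ^ n ≠ 0 := by positivity
  have : (3:ℝ) ^ n = 2 * a := by
    field_simp at h
    linarith
  have hz : (3:ℤ) ^ n = 2 * a := by exact_mod_cast this
  have : (2:ℤ) ∣ 3 ^ n := ⟨a, hz⟩
  have := Int.Prime.dvd_pow' (by norm_num) this
  norm_num at this

lemma addrLeft_replicate (i : Fin 3) (n : ℕ) :
    addrLeft (List.replicate n i) = ((i:ℕ):ℝ) / 2 * (1 - (1/3:ℝ) ^ n) := by
  induction n with
  | zero => simp [addrLeft]
  | succ n ih =>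
    rw [List.replicate_succ]
    show ((i:ℕ):ℝ) / 3 + addrLeft (List.replicate n i) / 3 = _
    rw [ih, pow_succ]
    ring

lemma addrLen_replicate (i : Fin 3) (n : ℕ) :
    addrLen (List.replicate n i) = (1/3:ℝ) ^ n := by
  unfold addrLen
  rw [List.length_replicate]

lemma Iaddr_replicate_mono (i : Fin 3) {n n' : ℕ} (h : n ≤ n') :
    Iaddr (List.replicate n' i) ⊆ Iaddr (List.replicate n i) := by
  have : List.replicate n' i = List.replicate n i ++ List.replicate (n' - n) i := by
    rw [← List.replicate_add]
    congr 1
    omega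
  rw [this]
  exact Iaddr_append_subset _ _

/-- There is a level `N ≥ d` such that the interior of `I_{i^N}` avoids all breaks. -/
lemma exists_good_level (i : Fin 3) (B : Finset ℝ) (hBt : ∀ b ∈ B, IsTriadic b) (d : ℕ) :
    ∃ N : ℕ, d ≤ N ∧ ∀ x ∈ Set.Ioo (addrLeft (List.replicate N i))
      (addrLeft (List.replicate N i) + addrLen (List.replicate N i)), x ∉ (B : Set ℝ) := by
  classical
  have key : ∀ b ∈ B, ∃ n : ℕ, ∀ n' ≥ n, b ∉ Set.Ioo (addrLeft (List.replicate n' i))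
      (addrLeft (List.replicate n' i) + addrLen (List.replicate n' i)) := by
    intro b hb
    have hci : ((i:ℕ):ℝ) / 2 ≤ 1 := by
      have := i.is_lt
      have : ((i:ℕ):ℝ) ≤ 2 := by exact_mod_cast (by omega : (i:ℕ) ≤ 2)
      linarith
    have hci0 : 0 ≤ ((i:ℕ):ℝ) / 2 := by positivity
    set ci := ((i:ℕ):ℝ) / 2 with hcidef
    have hbound : ∀ n' : ℕ, Set.Ioo (addrLeft (List.replicate n' i))
        (addrLeft (List.replicate n' i) + addrLen (List.replicate n' i)) ⊆
        Set.Ioo (ci - (1/3:ℝ)^n') (ci + (1/3:ℝ)^n') := by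
      intro n' x hx
      rw [addrLeft_replicate, addrLen_replicate] at hx
      have hp : (0:ℝ) < (1/3:ℝ)^n' := by positivity
      constructor
      · have : ci - ci * (1/3:ℝ)^n' ≥ ci - (1/3:ℝ)^n' := by nlinarith
        have h1 := hx.1
        rw [← hcidef] at h1
        nlinarith
      · have h2 := hx.2
        rw [← hcidef] at h2
        nlinarith
    by_cases hbc : b = ci
    · -- b = i/2 : only possible when i = 0 or i = 2, excluded by endpoints, or i = 1, not triadic
      rcases (by omega : (i:ℕ) = 0 ∨ (i:ℕ) = 1 ∨ (i:ℕ) = 2) with h0 | h1 | h2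
      · refine ⟨0, fun n' _ hmem => ?_⟩
        have h1' := hmem.1
        rw [addrLeft_replicate] at h1'
        have hv : ((i:ℕ):ℝ) = 0 := by rw [h0]; norm_num
        have hb0 : b = 0 := by rw [hbc, hcidef, hv]; norm_num
        rw [hv, hb0] at h1'
        norm_num at h1'
      · exfalso
        apply half_not_triadic
        have hhalf : ci = 1/2 := by rw [hcidef, h1]; norm_num
        rw [← hhalf, ← hbc]
        exact hBt b hb
      · refine ⟨0, fun n' _ hmem => ?_⟩
        have h2' := hmem.2
        rw [addrLeft_replicate, addrLen_replicate] at h2'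
        have hv : ((i:ℕ):ℝ) = 2 := by rw [h2]; norm_num
        have hb1 : b = 1 := by rw [hbc, hcidef, hv]; norm_num
        rw [hv, hb1] at h2'
        have heq : (2:ℝ)/2*(1-(1/3:ℝ)^n') + (1/3:ℝ)^n' = 1 := by ring
        linarith
    · have hd : 0 < |b - ci| := by
        rw [abs_pos]
        intro h
        exact hbc (by linarith)
      obtain ⟨n, hn⟩ := exists_pow_lt_of_lt_one hd (by norm_num : (1/3:ℝ) < 1)
      refine ⟨n, fun n' hn' hmem => ?_⟩
      have hle : (1/3:ℝ)^n' ≤ (1/3:ℝ)^n :=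
        pow_le_pow_of_le_one (by norm_num) (by norm_num) hn'
      have := hbound n' hmem
      have hab : |b - ci| < (1/3:ℝ)^n' := by
        rw [abs_lt]
        constructor <;> [linarith [this.1]; linarith [this.2]]
      linarith
  set nb : ℝ → ℕ := fun b =>
    if h : ∃ n : ℕ, ∀ n' ≥ n, b ∉ Set.Ioo (addrLeft (List.replicate n' i))
      (addrLeft (List.replicate n' i) + addrLen (List.replicate n' i)) then h.choose else 0
    with hnb
  refine ⟨max d (B.sup nb), le_max_left _ _, ?_⟩
  intro x hx hxB
  have hex := key x hxB
  have hspec : ∀ n' ≥ nb x, x ∉ Set.Ioo (addrLeft (List.replicate n' i))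
      (addrLeft (List.replicate n' i) + addrLen (List.replicate n' i)) := by
    rw [hnb]
    simp only [dif_pos hex]
    exact hex.choose_spec
  exact hspec _ (le_trans (Finset.le_sup hxB) (le_max_right _ _)) hx


/-! ### Existence of a triadic-linear level -/

lemma exists_triadicLinear (i : Fin 3) {f : ℝ → ℝ} (hf : IsF3 f) :
    ∃ n : ℕ, ∃ β : Address, IsTriadicLinearOn f (List.replicate n i) β := by
  obtain ⟨B, hBt, hB⟩ := hf.2.2.2
  obtain ⟨N, -, hN⟩ := exists_good_level i B hBt 0
  have h3 : (3:ℝ) ≠ 0 := by norm_num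
  set u := addrLeft (List.replicate N i) with hu
  set lenN := addrLen (List.replicate N i) with hlenN
  have hlenNpos : 0 < lenN := addrLen_pos _
  have humem : u ∈ Iaddr (List.replicate N i) := ⟨le_refl _, by linarith⟩
  have hvmem : u + lenN ∈ Iaddr (List.replicate N i) := ⟨by linarith, le_refl _⟩
  have hu01 := Iaddr_subset _ humem
  have hv01 := Iaddr_subset _ hvmem
  have hIoo01 : Set.Ioo u (u + lenN) ⊆ Set.Ioo (0:ℝ) 1 := fun x hx =>
    ⟨lt_of_le_of_lt hu01.1 hx.1, lt_of_lt_of_le hx.2 hv01.2⟩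
  have H : ∀ x ∈ Set.Ioo u (u + lenN), ∃ k : ℤ, ∃ c : ℝ, IsTriadic c ∧
      ∀ᶠ y in nhds x, f y = (3:ℝ) ^ k * y + c := by
    intro x hx
    have hx01 := hIoo01 hx
    obtain ⟨k, c, hc, hev⟩ := hB x (Set.Ioo_subset_Icc_self hx01) (hN x hx)
    refine ⟨k, c, hc, ?_⟩
    rwa [nhdsWithin_eq_nhds.2 (Icc_mem_nhds hx01.1 hx01.2)] at hev
  obtain ⟨k, c, hc, hform⟩ := glue_affine (by linarith : u < u + lenN) H
  have hIccform : ∀ y ∈ Set.Icc u (u + lenN), f y = (3:ℝ) ^ k * y + c :=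
    affine_endpoints hf (zpow_pos (by norm_num) k) (by linarith) hu01 hv01 hform
  -- k ≤ N
  have hlenNz : lenN = (3:ℝ) ^ (-(N:ℤ)) := by
    rw [hlenN, addrLen_eq_zpow, List.length_replicate]
  have hk : k ≤ (N:ℤ) := by
    by_contra hcon
    push_neg at hcon
    have h1 : f (u + lenN) - f u = (3:ℝ) ^ k * lenN := by
      rw [hIccform u ⟨le_refl _, by linarith⟩, hIccform (u + lenN) ⟨by linarith, le_refl _⟩]
      ring
    have h2 : f (u + lenN) - f u ≤ 1 := by
      have := (hf.mapsTo hv01).2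
      have := (hf.mapsTo hu01).1
      linarith
    have h4 : (3:ℝ) ^ k * lenN = (3:ℝ) ^ (k - (N:ℤ)) := by
      rw [hlenNz, ← zpow_add₀ h3]
      congr 1
    have h5 : (3:ℝ) ^ (1:ℤ) ≤ (3:ℝ) ^ (k - (N:ℤ)) :=
      zpow_le_zpow_right₀ (by norm_num) (by omega)
    rw [zpow_one] at h5
    rw [h4] at h1
    linarith
  obtain ⟨a, nc, hca⟩ := hc
  set n' := max N (k.toNat + nc) with hn'
  have hNn' : N ≤ n' := le_max_left _ _
  have hn'2 : k.toNat + nc ≤ n' := le_max_right _ _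
  have hkn' : k ≤ (n' : ℤ) := le_trans hk (by exact_mod_cast hNn')
  set lN : ℕ := ((n' : ℤ) - k).toNat with hlN
  have hlNz : (lN : ℤ) = (n' : ℤ) - k := Int.toNat_of_nonneg (by omega)
  have hlNnc : nc ≤ lN := by omega
  set u' := addrLeft (List.replicate n' i) with hu'
  set len' := addrLen (List.replicate n' i) with hlen'
  have hlen'pos : 0 < len' := addrLen_pos _
  have hlen'z : len' = (3:ℝ) ^ (-(n':ℤ)) := by
    rw [hlen', addrLen_eq_zpow, List.length_replicate]
  have hsub : Iaddr (List.replicate n' i) ⊆ Iaddr (List.replicate N i) :=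
    Iaddr_replicate_mono i hNn'
  have hform' : ∀ t ∈ Iaddr (List.replicate n' i), f t = (3:ℝ) ^ k * t + c :=
    fun t ht => hIccform t (hsub ht)
  have hu'mem : u' ∈ Iaddr (List.replicate n' i) := ⟨le_refl _, by linarith⟩
  have hv'mem : u' + len' ∈ Iaddr (List.replicate n' i) := ⟨by linarith, le_refl _⟩
  set D := (3:ℝ) ^ k * u' + c with hD
  have hD0 : 0 ≤ D := by
    have h0 := (hf.mapsTo (Iaddr_subset _ hu'mem)).1
    rw [hform' u' hu'mem] at h0
    exact h0
  have e3 : (3:ℝ) ^ k * (3:ℝ) ^ (-(n':ℤ)) = (3:ℝ) ^ (-(lN:ℤ)) := by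
    rw [← zpow_add₀ h3]
    congr 1
    omega
  have hD1 : D + (3:ℝ) ^ (-(lN:ℤ)) ≤ 1 := by
    have h1 := (hf.mapsTo (Iaddr_subset _ hv'mem)).2
    rw [hform' _ hv'mem] at h1
    rw [hlen'z] at h1
    calc D + (3:ℝ) ^ (-(lN:ℤ)) = (3:ℝ) ^ k * (u' + (3:ℝ) ^ (-(n':ℤ))) + c := by
          rw [hD, mul_add, ← e3]; ring
      _ ≤ 1 := h1
  obtain ⟨b, hbeq⟩ := addrLeft_eq_nat (List.replicate n' i)
  rw [List.length_replicate] at hbeq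
  rw [← hu'] at hbeq
  set jz : ℤ := (b:ℤ) + a * 3 ^ (lN - nc) with hjz
  have hcast : ∀ m : ℕ, (3:ℝ) ^ m = (3:ℝ) ^ ((m:ℤ)) := fun m => (zpow_natCast 3 m).symm
  have e4 : (3:ℝ) ^ k * u' * 3 ^ lN = (b:ℝ) := by
    rw [hbeq, hcast n', hcast lN]
    rw [div_eq_mul_inv, ← zpow_neg]
    rw [show (3:ℝ) ^ k * ((b:ℝ) * (3:ℝ) ^ (-(n':ℤ))) * (3:ℝ) ^ ((lN:ℤ)) =
      (b:ℝ) * ((3:ℝ) ^ k * (3:ℝ) ^ (-(n':ℤ)) * (3:ℝ) ^ ((lN:ℤ))) by ring]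
    rw [← zpow_add₀ h3, ← zpow_add₀ h3]
    rw [show k + -(n':ℤ) + (lN:ℤ) = 0 by omega]
    simp
  have e5 : c * 3 ^ lN = (a:ℝ) * 3 ^ (lN - nc) := by
    rw [hca, pow_sub₀ (3:ℝ) h3 hlNnc]
    field_simp
  have hDl : D * 3 ^ lN = (jz:ℝ) := by
    rw [hD, add_mul, e4, e5, hjz]
    push_cast
    ring
  have hjz0 : 0 ≤ jz := by
    have : (0:ℝ) ≤ (jz:ℝ) := by
      rw [← hDl]
      positivity
    exact_mod_cast this
  have hjzlt : jz < 3 ^ lN := by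
    have hpow : (0:ℝ) < (3:ℝ) ^ lN := by positivity
    have hinv : (3:ℝ) ^ (-(lN:ℤ)) * (3:ℝ) ^ lN = 1 := by
      rw [hcast lN, ← zpow_add₀ h3]
      simp
    have : (jz:ℝ) < (3:ℝ) ^ lN := by
      rw [← hDl]
      nlinarith
    exact_mod_cast this
  set j := jz.toNat with hj
  have hj3 : j < 3 ^ lN := by
    have h := hjzlt
    have h2 : jz < ((3 ^ lN : ℕ) : ℤ) := by push_cast; exact h
    omega
  have hjcast : ((j:ℕ):ℝ) = (jz:ℝ) := by
    rw [hj]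
    exact_mod_cast congrArg Int.cast (Int.toNat_of_nonneg hjz0)
  refine ⟨n', toAddr lN j, ?_⟩
  intro t ht
  rw [hform' t ht]
  unfold psiInv psi
  rw [addrLeft_toAddr lN j hj3]
  have haddrLen : addrLen (toAddr lN j) = (3:ℝ) ^ (-(lN:ℤ)) := by
    rw [addrLen_eq_zpow, length_toAddr]
  rw [haddrLen, ← hu', ← hlen']
  have hkey : ((j:ℕ):ℝ) / 3 ^ lN = D := by
    rw [hjcast, ← hDl]
    field_simp
  rw [hkey]
  have e6 : (3:ℝ) ^ (-(lN:ℤ)) * ((t - u') / len') = (3:ℝ) ^ k * (t - u') := by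
    rw [hlen'z, div_eq_mul_inv, ← zpow_neg, neg_neg]
    rw [show (3:ℝ) ^ (-(lN:ℤ)) * ((t - u') * (3:ℝ) ^ ((n':ℤ))) =
      (t - u') * ((3:ℝ) ^ (-(lN:ℤ)) * (3:ℝ) ^ ((n':ℤ))) by ring]
    rw [← zpow_add₀ h3, show -(lN:ℤ) + (n':ℤ) = k by omega]
    ring
  rw [e6, hD]
  ring


/-! ### leafExp machinery -/

lemma leafExp_witness (i : Fin 3) {f : ℝ → ℝ} (hf : IsF3 f) :
    ∃ β : Address, IsTriadicLinearOn f (List.replicate (leafExp i f) i) β := by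
  have hne : {n : ℕ | ∃ β : Address, IsTriadicLinearOn f (List.replicate n i) β}.Nonempty := by
    obtain ⟨n, β, h⟩ := exists_triadicLinear i hf
    exact ⟨n, β, h⟩
  exact Nat.sInf_mem hne

lemma leafExp_le {i : Fin 3} {f : ℝ → ℝ} {n : ℕ} {β : Address}
    (h : IsTriadicLinearOn f (List.replicate n i) β) : leafExp i f ≤ n :=
  Nat.sInf_le ⟨β, h⟩

lemma psi_nil (t : ℝ) : psi [] t = t := by
  unfold psi
  show (t - addrLeft []) / addrLen [] = t
  rw [show addrLeft [] = 0 from rfl]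
  unfold addrLen
  norm_num

lemma leafExp_id (i : Fin 3) : leafExp i (fun t : ℝ => t) = 0 := by
  refine Nat.eq_zero_of_le_zero (leafExp_le (β := []) ?_)
  intro t ht
  show t = psiInv [] (psi [] t)
  rw [psiInv_psi]

/-- Composition of triadic-linear witnesses. -/
lemma triadicLinear_comp {i : Fin 3} {f g : ℝ → ℝ} {m n : ℕ} {βf βg : Address}
    (hf : IsTriadicLinearOn f (List.replicate m i) βf)
    (hg : IsTriadicLinearOn g (List.replicate n i) βg) :
    IsTriadicLinearOn (fun t => f (phi (List.replicate m i) g t))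
      (List.replicate (m + n) i) (βf ++ βg) := by
  intro t ht
  have hrep : List.replicate (m + n) i = List.replicate m i ++ List.replicate n i :=
    List.replicate_add m n i
  rw [hrep] at ht
  have htm : t ∈ Iaddr (List.replicate m i) := Iaddr_append_subset _ _ ht
  have htn : psi (List.replicate m i) t ∈ Iaddr (List.replicate n i) := mem_Iaddr_append.1 ht
  show f (phi (List.replicate m i) g t) = psiInv (βf ++ βg) (psi (List.replicate (m + n) i) t)
  rw [hrep, phi, if_pos htm, hg _ htn]
  have hmem : psiInv (List.replicate m i)
      (psiInv βg (psi (List.replicate n i) (psi (List.replicate m i) t))) ∈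
      Iaddr (List.replicate m i) :=
    psiInv_mem_Iaddr (Iaddr_subset βg (psiInv_mem_Iaddr (mem_Iaddr_iff.1 htn)))
  rw [hf _ hmem, psi_psiInv, psiInv_append, psi_append]

/-- Extraction: if the product is triadic-linear at level `m + d`, then `g` has an
affine form at level `d`. -/
lemma key_extract {i : Fin 3} {f g : ℝ → ℝ} (hg : IsF3 g) {m d : ℕ} {βf β : Address}
    (hfm : IsTriadicLinearOn f (List.replicate m i) βf)
    (hF : IsTriadicLinearOn (fun t => f (phi (List.replicate m i) g t))
      (List.replicate (m + d) i) β) :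
    ∀ r ∈ Iaddr (List.replicate d i),
      g r = psi βf (psiInv β (psi (List.replicate d i) r)) := by
  intro r hr
  have hrep : List.replicate (m + d) i = List.replicate m i ++ List.replicate d i :=
    List.replicate_add m d i
  set α := List.replicate m i with hα
  set t := psiInv α r with htdef
  have htmd : t ∈ Iaddr (α ++ List.replicate d i) := by
    rw [mem_Iaddr_append, htdef, psi_psiInv]
    exact hr
  have htm : t ∈ Iaddr α := Iaddr_append_subset _ _ htmd
  have hFt := hF t (by rw [hrep]; exact htmd)
  have hphit : phi α g t = psiInv α (g r) := by
    rw [phi, if_pos htm, htdef, psi_psiInv]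
  simp only at hFt
  rw [hphit] at hFt
  have hmem : psiInv α (g r) ∈ Iaddr α :=
    psiInv_mem_Iaddr (hg.mapsTo (Iaddr_subset _ hr))
  rw [hfm _ hmem, psi_psiInv] at hFt
  have hpsit : psi (List.replicate (m + d) i) t = psi (List.replicate d i) r := by
    rw [hrep, psi_append, htdef, psi_psiInv]
  rw [hpsit] at hFt
  calc g r = psi βf (psiInv βf (g r)) := (psi_psiInv βf _).symm
    _ = psi βf (psiInv β (psi (List.replicate d i) r)) := by rw [hFt]

/-- The affine map `ψ_{βf} ∘ ψ_β⁻¹` in explicit affine form. -/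
lemma psi_psiInv_affine (βf β : Address) (s : ℝ) :
    psi βf (psiInv β s) = (addrLeft β - addrLeft βf) / addrLen βf +
      (addrLen β / addrLen βf) * s := by
  unfold psi psiInv
  field_simp
  ring

/-- Standardization: from an affine form on `I_{i^d}` to a triadic-linear witness. -/
lemma standardize {i : Fin 3} {g : ℝ → ℝ} (hg : IsF3 g) {d : ℕ} {βf β : Address}
    (h : ∀ r ∈ Iaddr (List.replicate d i),
      g r = psi βf (psiInv β (psi (List.replicate d i) r))) :
    ∃ γ : Address, IsTriadicLinearOn g (List.replicate d i) γ := by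
  have h3 : (3:ℝ) ≠ 0 := by norm_num
  set D := (addrLeft β - addrLeft βf) / addrLen βf with hDdef
  set E := addrLen β / addrLen βf with hEdef
  set u := addrLeft (List.replicate d i) with hudef
  set len := addrLen (List.replicate d i) with hlendef
  have hlenpos : 0 < len := addrLen_pos _
  have humem : u ∈ Iaddr (List.replicate d i) := ⟨le_refl _, by linarith⟩
  have hvmem : u + len ∈ Iaddr (List.replicate d i) := ⟨by linarith, le_refl _⟩
  have hform : ∀ r ∈ Iaddr (List.replicate d i), g r = D + E * psi (List.replicate d i) r := by
    intro r hr
    rw [h r hr, psi_psiInv_affine]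
  have hpsiu : psi (List.replicate d i) u = 0 := by
    unfold psi
    rw [← hudef]
    simp
  have hpsiv : psi (List.replicate d i) (u + len) = 1 := by
    unfold psi
    rw [← hudef, ← hlendef]
    field_simp
    ring
  have hD : D = g u := by rw [hform u humem, hpsiu]; ring
  have hDE : D + E = g (u + len) := by rw [hform _ hvmem, hpsiv]; ring
  have hD0 : 0 ≤ D := by
    rw [hD]; exact (hg.mapsTo (Iaddr_subset _ humem)).1
  have hDE1 : D + E ≤ 1 := by
    rw [hDE]; exact (hg.mapsTo (Iaddr_subset _ hvmem)).2
  have hEpos : 0 < E := div_pos (addrLen_pos β) (addrLen_pos βf)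
  have hEz : E = (3:ℝ) ^ ((βf.length : ℤ) - β.length) := by
    rw [hEdef, addrLen_eq_zpow, addrLen_eq_zpow, ← zpow_sub₀ h3]
    congr 1
    ring
  have hlen_le : βf.length ≤ β.length := by
    by_contra hcon
    push_neg at hcon
    have h5 : (3:ℝ) ^ (1:ℤ) ≤ (3:ℝ) ^ ((βf.length : ℤ) - β.length) :=
      zpow_le_zpow_right₀ (by norm_num) (by omega)
    rw [zpow_one] at h5
    rw [hEz] at hDE1
    linarith
  set l := β.length - βf.length with hldef
  have hEl : E = (3:ℝ) ^ (-(l:ℤ)) := by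
    rw [hEz]
    congr 1
    omega
  obtain ⟨bb, hbb⟩ := addrLeft_eq_nat β
  obtain ⟨bf, hbf⟩ := addrLeft_eq_nat βf
  have hcast : ∀ m : ℕ, (3:ℝ) ^ m = (3:ℝ) ^ ((m:ℤ)) := fun m => (zpow_natCast 3 m).symm
  have hDl : D * 3 ^ l = (bb:ℝ) - (bf:ℝ) * 3 ^ l := by
    rw [hDdef, addrLen_eq_zpow, hbb, hbf, hcast β.length, hcast βf.length, hcast l]
    rw [div_eq_mul_inv (bb:ℝ), div_eq_mul_inv (bf:ℝ), ← zpow_neg, ← zpow_neg]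
    rw [div_eq_mul_inv, ← zpow_neg, neg_neg]
    rw [sub_mul, sub_mul]
    rw [show (bb:ℝ) * (3:ℝ)^(-(β.length:ℤ)) * (3:ℝ)^((βf.length:ℤ)) * (3:ℝ)^((l:ℤ)) =
      (bb:ℝ) * ((3:ℝ)^(-(β.length:ℤ)) * (3:ℝ)^((βf.length:ℤ)) * (3:ℝ)^((l:ℤ))) by ring]
    rw [show (bf:ℝ) * (3:ℝ)^(-(βf.length:ℤ)) * (3:ℝ)^((βf.length:ℤ)) * (3:ℝ)^((l:ℤ)) =
      (bf:ℝ) * (((3:ℝ)^(-(βf.length:ℤ)) * (3:ℝ)^((βf.length:ℤ))) * (3:ℝ)^((l:ℤ))) by ring]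
    rw [← zpow_add₀ h3, ← zpow_add₀ h3, ← zpow_add₀ h3]
    rw [show -(β.length:ℤ) + (βf.length:ℤ) + (l:ℤ) = 0 by omega]
    rw [show -(βf.length:ℤ) + (βf.length:ℤ) = 0 by omega]
    simp
  set jz : ℤ := (bb:ℤ) - (bf:ℤ) * 3 ^ l with hjzdef
  have hDl' : D * 3 ^ l = (jz:ℝ) := by rw [hDl, hjzdef]; push_cast; ring
  have hjz0 : 0 ≤ jz := by
    have : (0:ℝ) ≤ (jz:ℝ) := by rw [← hDl']; positivity
    exact_mod_cast this
  have hjzlt : jz < 3 ^ l := by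
    have hpow : (0:ℝ) < (3:ℝ) ^ l := by positivity
    have hinv : (3:ℝ) ^ (-(l:ℤ)) * (3:ℝ) ^ l = 1 := by
      rw [hcast l, ← zpow_add₀ h3]
      simp
    have : (jz:ℝ) < (3:ℝ) ^ l := by
      rw [← hDl']
      rw [hEl] at hDE1
      nlinarith
    exact_mod_cast this
  set j := jz.toNat with hjj
  have hj3 : j < 3 ^ l := by
    have h2 : jz < ((3 ^ l : ℕ) : ℤ) := by push_cast; exact hjzlt
    omega
  have hjcast : ((j:ℕ):ℝ) = (jz:ℝ) := by
    rw [hjj]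
    exact_mod_cast congrArg Int.cast (Int.toNat_of_nonneg hjz0)
  refine ⟨toAddr l j, ?_⟩
  intro r hr
  rw [hform r hr]
  unfold psiInv
  rw [addrLeft_toAddr l j hj3]
  have haddrLen : addrLen (toAddr l j) = (3:ℝ) ^ (-(l:ℤ)) := by
    rw [addrLen_eq_zpow, length_toAddr]
  rw [haddrLen, ← hEl]
  have hkey : ((j:ℕ):ℝ) / 3 ^ l = D := by
    rw [hjcast, ← hDl']
    field_simp
  rw [hkey]

/-- The crucial additivity of `leafExp` under `⋄_i`. -/
lemma leafExp_diamI (i : Fin 3) {f g : ℝ → ℝ} (hf : IsF3 f) (hg : IsF3 g) :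
    leafExp i (diamI i f g) = leafExp i f + leafExp i g := by
  obtain ⟨βf, hβf⟩ := leafExp_witness i hf
  obtain ⟨βg, hβg⟩ := leafExp_witness i hg
  have hF : IsF3 (diamI i f g) := by
    unfold diamI
    exact comp_isF3 (phi_isF3 hg) hf
  have hle : leafExp i (diamI i f g) ≤ leafExp i f + leafExp i g :=
    leafExp_le (triadicLinear_comp hβf hβg)
  obtain ⟨β, hβ⟩ := leafExp_witness i hF
  rcases le_or_gt (leafExp i f) (leafExp i (diamI i f g)) with hmM | hMm
  · obtain ⟨d, hd⟩ : ∃ d, leafExp i (diamI i f g) = leafExp i f + d :=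
      ⟨leafExp i (diamI i f g) - leafExp i f, by omega⟩
    rw [hd] at hβ
    have hgr := key_extract hg hβf hβ
    obtain ⟨γ, hγ⟩ := standardize hg hgr
    have := leafExp_le hγ
    omega
  · exfalso
    set M := leafExp i (diamI i f g) with hM
    set m := leafExp i f with hm
    have hβ' : IsTriadicLinearOn (diamI i f g) (List.replicate m i)
        (β ++ List.replicate (m - M) i) := by
      have h1 := hβ.append (List.replicate (m - M) i)
      rwa [← List.replicate_add, show M + (m - M) = m by omega] at h1
    have hβ'' : IsTriadicLinearOn (fun t => f (phi (List.replicate m i) g t))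
        (List.replicate (m + 0) i) (β ++ List.replicate (m - M) i) := by
      rw [Nat.add_zero]
      exact hβ'
    have hgr := key_extract hg hβf hβ''
    -- g is affine on [0,1] with g 0 = 0 and g 1 = 1, hence the identity
    have hid : ∀ r ∈ Set.Icc (0:ℝ) 1, g r = r := by
      have h01 : ∀ r ∈ Set.Icc (0:ℝ) 1, g r = (addrLeft (β ++ List.replicate (m - M) i) -
          addrLeft βf) / addrLen βf +
          (addrLen (β ++ List.replicate (m - M) i) / addrLen βf) * r := by
        intro r hr
        have := hgr r (by rw [show List.replicate 0 i = ([]:Address) from rfl, Iaddr_nil]; exact hr)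
        rw [this, show List.replicate 0 i = ([]:Address) from rfl, psi_nil, psi_psiInv_affine]
      have e0 := h01 0 (by norm_num)
      have e1 := h01 1 (by norm_num)
      rw [hg.fix0] at e0
      rw [hg.fix1] at e1
      intro r hr
      have hX : (addrLeft (β ++ List.replicate (m - M) i) - addrLeft βf) / addrLen βf = 0 := by
        linarith
      have hY : addrLen (β ++ List.replicate (m - M) i) / addrLen βf = 1 := by
        linarith
      rw [h01 r hr, hX, hY]
      ring
    have hphig : ∀ t, phi (List.replicate m i) g t = t := by
      intro t
      by_cases ht : t ∈ Iaddr (List.replicate m i)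
      · rw [phi, if_pos ht, hid _ (mem_Iaddr_iff.1 ht), psiInv_psi]
      · exact phi_not_mem g ht
    have hfM : IsTriadicLinearOn f (List.replicate M i) β := by
      intro t ht
      have h1 := hβ t ht
      have h2 : diamI i f g t = f (phi (List.replicate m i) g t) := rfl
      rw [h2, hphig t] at h1
      exact h1
    have := leafExp_le hfM
    omega

/-- for each `i ∈ {0,1,2}`, `⋄_i` makes `F₃` a monoid with identity
the identity element of `F₃`. -/
theorem diamI_monoid (i : Fin 3) :
    (∀ f g : ℝ → ℝ, IsF3 f → IsF3 g → IsF3 (diamI i f g)) ∧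
    (∀ f : ℝ → ℝ, IsF3 f → diamI i f (fun t => t) = f ∧ diamI i (fun t => t) f = f) ∧
    (∀ f g h : ℝ → ℝ, IsF3 f → IsF3 g → IsF3 h →
      diamI i (diamI i f g) h = diamI i f (diamI i g h)) := by
  refine ⟨?_, ?_, ?_⟩
  · intro f g hf hg
    unfold diamI
    exact comp_isF3 (phi_isF3 hg) hf
  · intro f hf
    constructor
    · funext t
      show f (phi (List.replicate (leafExp i f) i) (fun t => t) t) = f t
      rw [phi_id]
    · funext t
      show (fun t => t) (phi (List.replicate (leafExp i (fun t : ℝ => t)) i) f t) = f t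
      rw [leafExp_id]
      show phi [] f t = f t
      rw [phi_nil hf]
  · intro f g h hf hg hh
    have hM := leafExp_diamI i hf hg
    funext t
    show (diamI i f g) (phi (List.replicate (leafExp i (diamI i f g)) i) h t) =
      f (phi (List.replicate (leafExp i f) i) (diamI i g h) t)
    rw [hM]
    show f (phi (List.replicate (leafExp i f) i) g
      (phi (List.replicate (leafExp i f + leafExp i g) i) h t)) = _
    congr 1
    have hq : ∀ s ∈ Set.Icc (0:ℝ) 1, phi (List.replicate (leafExp i g) i) h s ∈
        Set.Icc (0:ℝ) 1 := fun s hs => (phi_isF3 hh).mapsTo hs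
    have e1 : phi (List.replicate (leafExp i f) i) (diamI i g h) t =
        phi (List.replicate (leafExp i f) i) g
          (phi (List.replicate (leafExp i f) i) (phi (List.replicate (leafExp i g) i) h) t) := by
      rw [show diamI i g h = fun s => g (phi (List.replicate (leafExp i g) i) h s) from rfl,
        phi_comp _ _ _ hq]
    rw [e1]
    congr 1
    rw [phi_append, ← List.replicate_add]
end
end

section
/- The sequence defined by c(1) = 1 and, for n ≥ 2, c(n) = 4·∑_{i=1}^{⌊n/2⌋} C(n,i)·c(i)·c(n−i) for odd n, and c(n) = 4·∑_{i=1}^{n/2−1} C(n,i)·c(i)·c(n−i) + 2·C(n, n/2)·c(n/2)² for even n, satisfies the closed form c(n) = 2^{n−1} · n! · Catalan(n−1) for all n ≥ 1. -/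
open Finset

private lemma cat_sum (m : ℕ) :
    ∑ j ∈ Finset.range (m + 1), catalan j * catalan (m - j) = catalan (m + 1) := by
  rw [catalan_succ]
  exact (Fin.sum_univ_eq_sum_range (fun j => catalan j * catalan (m - j)) (m + 1)).symm

private lemma key_sum (n : ℕ) (hn : 2 ≤ n) :
    ∑ i ∈ Finset.Icc 1 (n - 1),
      n.choose i * (2 ^ (i - 1) * i.factorial * catalan (i - 1))
        * (2 ^ (n - i - 1) * (n - i).factorial * catalan (n - i - 1))
    = 2 ^ (n - 2) * n.factorial * catalan (n - 1) := by
  have hIcc : Finset.Icc 1 (n - 1) = Finset.Ico 1 n := by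
    rw [← Finset.Ico_add_one_right_eq_Icc]
    congr 1
    omega
  rw [hIcc, Finset.sum_Ico_eq_sum_range]
  have h1 : ∑ j ∈ Finset.range (n - 1),
      n.choose (1 + j) * (2 ^ (1 + j - 1) * (1 + j).factorial * catalan (1 + j - 1))
        * (2 ^ (n - (1 + j) - 1) * (n - (1 + j)).factorial * catalan (n - (1 + j) - 1))
      = ∑ j ∈ Finset.range (n - 1),
        2 ^ (n - 2) * n.factorial * (catalan j * catalan (n - 2 - j)) := by
    apply Finset.sum_congr rfl
    intro j hj
    rw [Finset.mem_range] at hj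
    have hj' : 1 + j ≤ n := by omega
    have e1 : 1 + j - 1 = j := by omega
    have e2 : n - (1 + j) - 1 = n - 2 - j := by omega
    have e3 : j + (n - 2 - j) = n - 2 := by omega
    rw [e1, e2]
    calc n.choose (1 + j) * (2 ^ j * (1 + j).factorial * catalan j)
          * (2 ^ (n - 2 - j) * (n - (1 + j)).factorial * catalan (n - 2 - j))
        = (n.choose (1 + j) * (1 + j).factorial * (n - (1 + j)).factorial)
          * (2 ^ j * 2 ^ (n - 2 - j)) * (catalan j * catalan (n - 2 - j)) := by ring
      _ = 2 ^ (n - 2) * n.factorial * (catalan j * catalan (n - 2 - j)) := by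
          rw [Nat.choose_mul_factorial_mul_factorial hj', ← pow_add, e3]; ring
  rw [h1, ← Finset.mul_sum]
  have hm : n - 1 = (n - 2) + 1 := by omega
  rw [hm, cat_sum]

private lemma refl_sum (g : ℕ → ℕ) (n a b : ℕ) (ha : 1 ≤ a) (hb : b ≤ n - 1) (hn : 1 ≤ n) :
    ∑ i ∈ Finset.Icc a b, g (n - i) = ∑ i ∈ Finset.Icc (n - b) (n - a), g i := by
  refine Finset.sum_nbij' (fun i => n - i) (fun i => n - i) ?_ ?_ ?_ ?_ ?_ <;>
    intro x hx <;> try simp only [Finset.mem_Icc] at hx ⊢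
  all_goals first | rfl | omega

/-- the sequence counting disjoint-union representatives, defined by
`c(1) = 1` and the stated recurrences for `n ≥ 2`, has closed form
`c(n) = 2^(n-1) · n! · Catalan(n-1)` for all `n ≥ 1`. -/
theorem count_closed_form (c : ℕ → ℕ) (h1 : c 1 = 1)
    (hodd : ∀ n : ℕ, 2 ≤ n → Odd n →
      c n = 4 * ∑ i ∈ Finset.Icc 1 (n / 2), n.choose i * c i * c (n - i))
    (heven : ∀ n : ℕ, 2 ≤ n → Even n →
      c n = 4 * ∑ i ∈ Finset.Icc 1 (n / 2 - 1), n.choose i * c i * c (n - i)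
          + 2 * n.choose (n / 2) * c (n / 2) ^ 2) :
    ∀ n : ℕ, 1 ≤ n → c n = 2 ^ (n - 1) * n.factorial * catalan (n - 1) := by
  intro n
  induction n using Nat.strong_induction_on with
  | _ n IH =>
    intro hn
    rcases eq_or_lt_of_le hn with h1n | h2n
    · rw [← h1n, h1]; simp
    · have hn2 : 2 ≤ n := h2n
      set d : ℕ → ℕ := fun k => 2 ^ (k - 1) * k.factorial * catalan (k - 1) with hd
      have hc : ∀ i, 1 ≤ i → i < n → c i = d i := fun i h1i h2i => IH i h2i h1i
      set g : ℕ → ℕ := fun i => n.choose i * d i * d (n - i) with hg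
      have hgsym : ∀ i, 1 ≤ i → i ≤ n - 1 → g (n - i) = g i := by
        intro i hi1 hi2
        simp only [hg]
        rw [Nat.choose_symm (by omega), Nat.sub_sub_self (by omega : i ≤ n)]
        ring
      have hS : ∑ i ∈ Finset.Icc 1 (n - 1), g i
          = 2 ^ (n - 2) * n.factorial * catalan (n - 1) := key_sum n hn2
      have hIoc : Finset.Icc 1 (n - 1) = Finset.Ioc 0 (n - 1) := by
        ext x; simp only [Finset.mem_Icc, Finset.mem_Ioc]; omega
      have main : c n = 2 * ∑ i ∈ Finset.Icc 1 (n - 1), g i := by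
        rcases Nat.even_or_odd n with hev | hod
        · -- even case, n = 2k
          set k := n / 2 with hk
          have hkn : n = 2 * k := by
            obtain ⟨m, hm⟩ := hev; omega
          have hk1 : 1 ≤ k := by omega
          have hT : ∑ i ∈ Finset.Icc 1 (k - 1), n.choose i * c i * c (n - i)
              = ∑ i ∈ Finset.Icc 1 (k - 1), g i := by
            apply Finset.sum_congr rfl
            intro i hi
            simp only [Finset.mem_Icc] at hi
            rw [hc i hi.1 (by omega), hc (n - i) (by omega) (by omega)]
          have hck : c k = d k := hc k hk1 (by omega)
          have hsplit : ∑ i ∈ Finset.Icc 1 (n - 1), g i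
              = 2 * (∑ i ∈ Finset.Icc 1 (k - 1), g i) + g k := by
            rcases eq_or_lt_of_le hk1 with hk1' | hk2
            · have hK : k = 1 := hk1'.symm
              have hN : n = 2 := by omega
              rw [hK, hN]
              norm_num
            · have hk2' : 2 ≤ k := hk2
              rw [hIoc, ← Finset.sum_Ioc_consecutive g (by omega : 0 ≤ k - 1)
                (by omega : k - 1 ≤ n - 1),
                ← Finset.sum_Ioc_consecutive g (by omega : k - 1 ≤ k)
                (by omega : k ≤ n - 1)]
              have e1 : Finset.Ioc (k - 1) k = {k} := by
                ext x; simp only [Finset.mem_Ioc, Finset.mem_singleton]; omega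
              have e2 : ∑ i ∈ Finset.Ioc k (n - 1), g i
                  = ∑ i ∈ Finset.Icc 1 (k - 1), g i := by
                have : Finset.Ioc k (n - 1) = Finset.Icc (n - (k - 1)) (n - 1) := by
                  ext x; simp only [Finset.mem_Ioc, Finset.mem_Icc]; omega
                rw [this, ← refl_sum g n 1 (k - 1) le_rfl (by omega) (by omega)]
                apply Finset.sum_congr rfl
                intro i hi
                simp only [Finset.mem_Icc] at hi
                exact hgsym i hi.1 (by omega)
              have e3 : Finset.Ioc 0 (k - 1) = Finset.Icc 1 (k - 1) := by
                ext x; simp only [Finset.mem_Ioc, Finset.mem_Icc]; omega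
              rw [e1, e2, Finset.sum_singleton, e3]; ring
          rw [heven n hn2 hev, ← hk, hT, hck, hsplit]
          have hgk : g k = n.choose k * d k * d k := by
            simp only [hg]
            congr 2
            omega
          rw [hgk]
          ring
        · -- odd case, n = 2k+1
          set k := n / 2 with hk
          have hkn : n = 2 * k + 1 := by
            obtain ⟨m, hm⟩ := hod; omega
          have hk1 : 1 ≤ k := by omega
          have hT : ∑ i ∈ Finset.Icc 1 k, n.choose i * c i * c (n - i)
              = ∑ i ∈ Finset.Icc 1 k, g i := by
            apply Finset.sum_congr rfl
            intro i hi
            simp only [Finset.mem_Icc] at hi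
            rw [hc i hi.1 (by omega), hc (n - i) (by omega) (by omega)]
          have hsplit : ∑ i ∈ Finset.Icc 1 (n - 1), g i
              = 2 * ∑ i ∈ Finset.Icc 1 k, g i := by
            rw [hIoc, ← Finset.sum_Ioc_consecutive g (by omega : 0 ≤ k)
              (by omega : k ≤ n - 1)]
            have e2 : ∑ i ∈ Finset.Ioc k (n - 1), g i
                = ∑ i ∈ Finset.Icc 1 k, g i := by
              have : Finset.Ioc k (n - 1) = Finset.Icc (n - k) (n - 1) := by
                ext x; simp only [Finset.mem_Ioc, Finset.mem_Icc]; omega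
              rw [this, ← refl_sum g n 1 k le_rfl (by omega) (by omega)]
              apply Finset.sum_congr rfl
              intro i hi
              simp only [Finset.mem_Icc] at hi
              exact hgsym i hi.1 (by omega)
            have e3 : Finset.Ioc 0 k = Finset.Icc 1 k := by
              ext x; simp only [Finset.mem_Ioc, Finset.mem_Icc]; omega
            rw [e2, e3]; ring
          rw [hodd n hn2 hod, ← hk, hT, hsplit]
          ring
      rw [main, hS]
      have : 2 * 2 ^ (n - 2) = 2 ^ (n - 1) := by
        rw [← pow_succ']
        congr 1
        omega
      calc 2 * (2 ^ (n - 2) * n.factorial * catalan (n - 1))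
          = 2 * 2 ^ (n - 2) * n.factorial * catalan (n - 1) := by ring
        _ = 2 ^ (n - 1) * n.factorial * catalan (n - 1) := by rw [this]
end

section
/- Thompson's group F embeds into the Brown–Thompson group F₃ via the homomorphism determined on generators by x₀ ↦ y₀ and x₁ ↦ y₂; in particular this assignment extends to a well-defined injective group homomorphism F → F₃. -/
open scoped commutatorElement

/-- The defining relations of Thompson's group `F` on generators `x₀, x₁`:
`[x₀x₁⁻¹, x₀⁻¹x₁x₀]` and `[x₀x₁⁻¹, x₀⁻²x₁x₀²]`. -/
def relsF : Set (FreeGroup (Fin 2)) :=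
  let a : FreeGroup (Fin 2) := FreeGroup.of 0
  let b : FreeGroup (Fin 2) := FreeGroup.of 1
  {⁅a * b⁻¹, a⁻¹ * b * a⁆, ⁅a * b⁻¹, a⁻¹ * a⁻¹ * b * a * a⁆}

/-- The defining relations of the Brown–Thompson group `F₃` on generators
`y₀, y₁, y₂, …`: `yₙyₘ = yₘy_{n+2}` for all `m < n`. -/
def relsF3 : Set (FreeGroup ℕ) :=
  {r | ∃ m n : ℕ, m < n ∧
    r = (FreeGroup.of n * FreeGroup.of m) *
        (FreeGroup.of m * FreeGroup.of (n + 2))⁻¹}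

namespace ThompsonEmbed

/-! ### The group `F₃` as a presented group -/

abbrev GF3 : Type := PresentedGroup relsF3

def Y (n : ℕ) : GF3 := PresentedGroup.of n

lemma rel3_mem {r : FreeGroup ℕ} (hr : r ∈ relsF3) : PresentedGroup.mk relsF3 r = 1 :=
  (QuotientGroup.eq_one_iff _).mpr (Subgroup.subset_normalClosure hr)

lemma Yrel {m n : ℕ} (h : m < n) : Y n * Y m = Y m * Y (n + 2) := by
  have hmem : ((FreeGroup.of n * FreeGroup.of m) *
      (FreeGroup.of m * FreeGroup.of (n + 2))⁻¹ : FreeGroup ℕ) ∈ relsF3 := ⟨m, n, h, rfl⟩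
  have h1 := rel3_mem hmem
  rw [map_mul, map_inv, map_mul, map_mul] at h1
  have h2 := mul_inv_eq_one.mp h1
  exact h2

lemma Yconj {m n : ℕ} (h : m < n) : (Y m)⁻¹ * Y n * Y m = Y (n + 2) := by
  rw [mul_assoc, Yrel h]; group




/-- Insert letter `j` into a word, bumping larger letters by `d`
(normal-form insertion for Thompson-like monoids). -/
def ins (d j : ℕ) : List ℕ → List ℕ
  | [] => [j]
  | a :: l => if a ≤ j then a :: ins d j l else j :: ((a :: l).map (· + d))

@[simp] lemma ins_nil (d j : ℕ) : ins d j [] = [j] := rfl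

lemma ins_cons_le {d j a : ℕ} (l : List ℕ) (h : a ≤ j) :
    ins d j (a :: l) = a :: ins d j l := by simp [ins, h]

lemma ins_cons_gt {d j a : ℕ} (l : List ℕ) (h : j < a) :
    ins d j (a :: l) = j :: ((a :: l).map (· + d)) := by
  simp [ins, Nat.not_le.mpr h]

lemma ins_length (d j : ℕ) (l : List ℕ) : (ins d j l).length = l.length + 1 := by
  induction l with
  | nil => rfl
  | cons a l ih => by_cases h : a ≤ j <;> simp [ins, h, ih]

lemma map_ins (d j : ℕ) (l : List ℕ) :
    (ins d j l).map (· + d) = ins d (j + d) (l.map (· + d)) := by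
  induction l with
  | nil => rfl
  | cons a l ih =>
    by_cases h : a ≤ j
    · rw [ins_cons_le _ h, List.map_cons, ih, List.map_cons,
        ins_cons_le _ (Nat.add_le_add_right h d)]
    · rw [ins_cons_gt _ (Nat.not_le.mp h), List.map_cons, List.map_cons,
        ins_cons_gt _ (Nat.add_lt_add_right (Nat.not_le.mp h) d)]

lemma ins_exch {d m n : ℕ} (h : m < n) (l : List ℕ) :
    ins d m (ins d n l) = ins d (n + d) (ins d m l) := by
  induction l with
  | nil =>
    rw [ins_nil, ins_nil, ins_cons_gt _ h, ins_cons_le _ (by omega : m ≤ n + d)]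
    simp
  | cons a l ih =>
    rcases le_or_gt a m with h1 | h1
    · rw [ins_cons_le _ (le_trans h1 (le_of_lt h)), ins_cons_le _ h1,
        ins_cons_le _ h1, ins_cons_le _ (by omega : a ≤ n + d), ih]
    · rcases le_or_gt a n with h2 | h2
      · rw [ins_cons_le _ h2, ins_cons_gt _ h1, ins_cons_gt _ h1, List.map_cons,
          List.map_cons, map_ins, ins_cons_le _ (by omega),
          ins_cons_le _ (Nat.add_le_add_right h2 d)]
      · rw [ins_cons_gt _ h2, ins_cons_gt _ (lt_trans h h2),
          ins_cons_gt _ (by omega : m < n), List.map_cons, List.map_cons,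
          ins_cons_le _ (by omega : m ≤ n + d), ins_cons_gt _ (by omega : n + d < a + d)]


lemma mem_ins {d j x : ℕ} {l : List ℕ} (h : x ∈ ins d j l) :
    x = j ∨ x ∈ l ∨ ∃ c ∈ l, x = c + d := by
  induction l with
  | nil => simp at h; tauto
  | cons a l ih =>
    by_cases ha : a ≤ j
    · rw [ins_cons_le _ ha] at h
      rcases List.mem_cons.mp h with h | h
      · subst h; right; left; simp
      · rcases ih h with h | h | ⟨c, hc, rfl⟩
        · tauto
        · right; left; exact List.mem_cons_of_mem _ h
        · exact Or.inr (Or.inr ⟨c, List.mem_cons_of_mem _ hc, rfl⟩)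
    · rw [ins_cons_gt _ (Nat.not_le.mp ha)] at h
      rcases List.mem_cons.mp h with h | h
      · tauto
      · rcases List.mem_map.mp h with ⟨c, hc, rfl⟩
        exact Or.inr (Or.inr ⟨c, hc, rfl⟩)

lemma ins_exists_le (d j : ℕ) (l : List ℕ) : ∃ x ∈ ins d j l, x ≤ j := by
  induction l with
  | nil => exact ⟨j, by simp⟩
  | cons a l ih =>
    by_cases h : a ≤ j
    · rw [ins_cons_le _ h]; exact ⟨a, by simp, h⟩
    · rw [ins_cons_gt _ (Nat.not_le.mp h)]; exact ⟨j, by simp⟩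

lemma ins_headI_le (d j : ℕ) (l : List ℕ) : (ins d j l).headI ≤ j := by
  induction l with
  | nil => simp
  | cons a l ih =>
    by_cases h : a ≤ j
    · rw [ins_cons_le _ h]; simpa using h
    · rw [ins_cons_gt _ (Nat.not_le.mp h)]; simp

lemma ins_injective (d j : ℕ) : ∀ {l₁ l₂ : List ℕ}, ins d j l₁ = ins d j l₂ → l₁ = l₂ := by
  intro l₁
  induction l₁ with
  | nil =>
    intro l₂ h
    cases l₂ with
    | nil => rfl
    | cons b m =>
      have := congrArg List.length h
      simp [ins_length] at this
  | cons a l ih =>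
    intro l₂ h
    cases l₂ with
    | nil =>
      have := congrArg List.length h
      simp [ins_length] at this
    | cons b m =>
      by_cases ha : a ≤ j <;> by_cases hb : b ≤ j
      · rw [ins_cons_le _ ha, ins_cons_le _ hb] at h
        obtain ⟨h1, h2⟩ := List.cons.injEq .. ▸ h
        rw [h1, ih h2]
      · rw [ins_cons_le _ ha, ins_cons_gt _ (Nat.not_le.mp hb)] at h
        obtain ⟨h1, h2⟩ := List.cons.injEq .. ▸ h
        have := ins_headI_le d j l
        rw [h2] at this
        simp [List.headI] at this
        omega
      · rw [ins_cons_gt _ (Nat.not_le.mp ha), ins_cons_le _ hb] at h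
        obtain ⟨h1, h2⟩ := List.cons.injEq .. ▸ h
        have := ins_headI_le d j m
        rw [← h2] at this
        simp [List.headI] at this
        omega
      · rw [ins_cons_gt _ (Nat.not_le.mp ha), ins_cons_gt _ (Nat.not_le.mp hb)] at h
        obtain ⟨h1, h2⟩ := List.cons.injEq .. ▸ h
        exact List.map_injective_iff.mpr (fun x y => by omega) h2


local notation "Srt" => List.Pairwise (α := ℕ) (· ≤ ·)

lemma ins_sorted {d j : ℕ} {l : List ℕ} (h : Srt l) : Srt (ins d j l) := by
  induction l with
  | nil => simp
  | cons a l ih =>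
    obtain ⟨ha, hl⟩ := List.pairwise_cons.mp h
    by_cases haj : a ≤ j
    · rw [ins_cons_le _ haj]
      refine List.pairwise_cons.mpr ⟨?_, ih hl⟩
      intro b hb
      rcases mem_ins hb with rfl | hb | ⟨c, hc, rfl⟩
      · exact haj
      · exact ha b hb
      · exact le_trans (ha c hc) (Nat.le_add_right c d)
    · rw [ins_cons_gt _ (Nat.not_le.mp haj)]
      refine List.pairwise_cons.mpr ⟨?_, ?_⟩
      · intro b hb
        rcases List.mem_map.mp hb with ⟨c, hc, rfl⟩
        have : a ≤ c := by
          rcases List.mem_cons.mp hc with rfl | hc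
          · exact le_refl _
          · exact ha c hc
        omega
      · exact List.pairwise_map.mpr (h.imp (fun hxy => by omega))

/-- count of letters `≤ c` -/
def cnt (c : ℕ) (l : List ℕ) : ℕ := l.countP (fun x => x ≤ c)

@[simp] lemma cnt_nil (c : ℕ) : cnt c [] = 0 := rfl

lemma cnt_cons (c a : ℕ) (l : List ℕ) :
    cnt c (a :: l) = cnt c l + (if a ≤ c then 1 else 0) := by
  simp [cnt, List.countP_cons]

lemma cnt_ins_gt {d c j : ℕ} (hcj : c < j) {l : List ℕ} (h : Srt l) :
    cnt c (ins d j l) = cnt c l := by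
  induction l with
  | nil => simp [cnt_cons, Nat.not_le.mpr hcj]
  | cons a l ih =>
    obtain ⟨ha, hl⟩ := List.pairwise_cons.mp h
    by_cases haj : a ≤ j
    · rw [ins_cons_le _ haj, cnt_cons, cnt_cons, ih hl]
    · rw [ins_cons_gt _ (Nat.not_le.mp haj)]
      have h1 : ∀ x ∈ a :: l, a ≤ x := by
        intro x hx
        rcases List.mem_cons.mp hx with rfl | hx
        · exact le_refl _
        · exact ha x hx
      have h2 : cnt c ((a :: l).map (· + d)) = 0 := by
        rw [cnt, List.countP_eq_zero]
        intro x hx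
        rcases List.mem_map.mp hx with ⟨e, he, rfl⟩
        have := h1 e he
        simp only [decide_eq_true_eq]
        omega
      have h3 : cnt c (a :: l) = 0 := by
        rw [cnt, List.countP_eq_zero]
        intro x hx
        have := h1 x hx
        simp only [decide_eq_true_eq]
        omega
      rw [cnt_cons, h2, h3, if_neg (by omega)]

lemma cnt_ins_self {d j : ℕ} {l : List ℕ} (h : Srt l) :
    cnt j (ins d j l) = cnt j l + 1 := by
  induction l with
  | nil => simp [cnt_cons]
  | cons a l ih =>
    obtain ⟨ha, hl⟩ := List.pairwise_cons.mp h
    by_cases haj : a ≤ j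
    · rw [ins_cons_le _ haj, cnt_cons, cnt_cons, ih hl]
      by_cases h' : a ≤ j <;> simp [h']
    · rw [ins_cons_gt _ (Nat.not_le.mp haj)]
      have h1 : ∀ x ∈ a :: l, a ≤ x := by
        intro x hx
        rcases List.mem_cons.mp hx with rfl | hx
        · exact le_refl _
        · exact ha x hx
      have h2 : cnt j ((a :: l).map (· + d)) = 0 := by
        rw [cnt, List.countP_eq_zero]
        intro x hx
        rcases List.mem_map.mp hx with ⟨e, he, rfl⟩
        have := h1 e he
        simp only [decide_eq_true_eq]
        omega
      have h3 : cnt j (a :: l) = 0 := by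
        rw [cnt, List.countP_eq_zero]
        intro x hx
        have := h1 x hx
        simp only [decide_eq_true_eq]
        omega
      rw [cnt_cons, h2, h3, if_pos (le_refl j)]

/-- fold-insert multiplication (normal form of `l · w`). -/
def nfmul (d : ℕ) (l w : List ℕ) : List ℕ := w.foldl (fun acc j => ins d j acc) l

@[simp] lemma nfmul_nil (d : ℕ) (l : List ℕ) : nfmul d l [] = l := rfl

lemma nfmul_cons (d j : ℕ) (l w : List ℕ) :
    nfmul d l (j :: w) = nfmul d (ins d j l) w := rfl

lemma nfmul_append (d : ℕ) (l w₁ w₂ : List ℕ) :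
    nfmul d l (w₁ ++ w₂) = nfmul d (nfmul d l w₁) w₂ := List.foldl_append ..

lemma nfmul_sorted {d : ℕ} {l : List ℕ} (h : Srt l) (w : List ℕ) : Srt (nfmul d l w) := by
  induction w generalizing l with
  | nil => exact h
  | cons j w ih => exact ih (ins_sorted h)

lemma nfmul_length (d : ℕ) (l w : List ℕ) :
    (nfmul d l w).length = l.length + w.length := by
  induction w generalizing l with
  | nil => simp
  | cons j w ih => rw [nfmul_cons, ih, ins_length, List.length_cons]; omega

lemma ins_all_gt {d j : ℕ} {l : List ℕ} (h : ∀ b ∈ l, j < b) :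
    ins d j l = j :: l.map (· + d) := by
  cases l with
  | nil => simp
  | cons a l => exact ins_cons_gt _ (h a (by simp))

lemma nfmul_exch {d j : ℕ} {v : List ℕ} (hv : Srt v) (u : List ℕ) :
    ins d j (nfmul d u v) = nfmul d u (ins d j v) := by
  induction v generalizing u with
  | nil => rfl
  | cons a v ih =>
    obtain ⟨ha, hv'⟩ := List.pairwise_cons.mp hv
    by_cases haj : a ≤ j
    · rw [ins_cons_le _ haj, nfmul_cons, nfmul_cons, ih hv']
    · have hja := Nat.not_le.mp haj
      have hall : ∀ b ∈ v, j < b := fun b hb => lt_of_lt_of_le hja (ha b hb)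
      rw [ins_cons_gt _ hja, nfmul_cons, nfmul_cons, ih hv', ins_all_gt hall,
        nfmul_cons, ins_exch hja, List.map_cons, nfmul_cons]

lemma nfmul_assoc {d : ℕ} (u : List ℕ) {v : List ℕ} (hv : Srt v) (w : List ℕ) :
    nfmul d (nfmul d u v) w = nfmul d u (nfmul d v w) := by
  induction w generalizing v with
  | nil => rfl
  | cons j w ih =>
    rw [nfmul_cons, nfmul_cons, nfmul_exch hv, ih (ins_sorted hv)]

lemma ins_of_all_le {d j : ℕ} {l : List ℕ} (h : ∀ a ∈ l, a ≤ j) :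
    ins d j l = l ++ [j] := by
  induction l with
  | nil => simp
  | cons a l ih =>
    rw [ins_cons_le _ (h a (by simp)), ih (fun x hx => h x (List.mem_cons_of_mem _ hx))]
    rfl

lemma nfmul_of_le {d : ℕ} {l v : List ℕ} (hv : Srt v)
    (hle : ∀ a ∈ l, ∀ b ∈ v, a ≤ b) : nfmul d l v = l ++ v := by
  induction v generalizing l with
  | nil => simp
  | cons b v ih =>
    obtain ⟨hb, hv'⟩ := List.pairwise_cons.mp hv
    rw [nfmul_cons, ins_of_all_le (fun a ha => hle a ha b (by simp))]
    rw [ih hv' ?_]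
    · simp
    · intro a ha c hc
      rcases List.mem_append.mp ha with ha | ha
      · exact hle a ha c (List.mem_cons_of_mem _ hc)
      · rcases List.mem_singleton.mp ha with rfl
        exact hb c hc


lemma cnt_nfmul_eq {d c : ℕ} {l w : List ℕ} (hl : Srt l) (hw : ∀ j ∈ w, c < j) :
    cnt c (nfmul d l w) = cnt c l := by
  induction w generalizing l with
  | nil => rfl
  | cons j w ih =>
    rw [nfmul_cons, ih (ins_sorted hl) (fun x hx => hw x (List.mem_cons_of_mem _ hx)),
      cnt_ins_gt (hw j (by simp)) hl]

lemma cnt_nfmul_ge {d c : ℕ} {l w : List ℕ} (hl : Srt l) (hw : ∀ j ∈ w, c ≤ j) :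
    cnt c l ≤ cnt c (nfmul d l w) := by
  induction w generalizing l with
  | nil => exact le_refl _
  | cons j w ih =>
    rw [nfmul_cons]
    refine le_trans ?_ (ih (ins_sorted hl) (fun x hx => hw x (List.mem_cons_of_mem _ hx)))
    rcases lt_or_eq_of_le (hw j (by simp)) with h | h
    · rw [cnt_ins_gt h hl]
    · subst h; rw [cnt_ins_self hl]; omega

lemma cnt_contra {d b₁ b₂ : ℕ} {u w₁ w₂ : List ℕ} (hu : Srt u) (hb : b₁ < b₂)
    (h₁ : ∀ j ∈ w₁, b₁ ≤ j) (h₂ : ∀ j ∈ w₂, b₂ ≤ j) :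
    nfmul d (ins d b₁ u) w₁ ≠ nfmul d (ins d b₂ u) w₂ := by
  intro h
  have hL : cnt b₁ u + 1 ≤ cnt b₁ (nfmul d (ins d b₁ u) w₁) := by
    have := cnt_nfmul_ge (d := d) (c := b₁) (l := ins d b₁ u) (ins_sorted hu) h₁
    rw [cnt_ins_self hu] at this
    omega
  have hR : cnt b₁ (nfmul d (ins d b₂ u) w₂) = cnt b₁ u := by
    rw [cnt_nfmul_eq (ins_sorted hu) (fun j hj => lt_of_lt_of_le hb (h₂ j hj)),
      cnt_ins_gt hb hu]
  rw [h, hR] at hL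
  omega

lemma nfmul_left_cancel {d : ℕ} :
    ∀ {v₁ v₂ u : List ℕ}, Srt u → Srt v₁ → Srt v₂ →
      nfmul d u v₁ = nfmul d u v₂ → v₁ = v₂ := by
  intro v₁
  induction v₁ with
  | nil =>
    intro v₂ u _ _ _ h
    rw [nfmul_nil] at h
    have := congrArg List.length h
    rw [nfmul_length] at this
    simpa using (List.eq_nil_of_length_eq_zero (by omega)).symm
  | cons b₁ w₁ ih =>
    intro v₂ u hu hv₁ hv₂ h
    cases v₂ with
    | nil =>
      rw [nfmul_nil] at h
      have := congrArg List.length h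
      rw [nfmul_length] at this
      simp at this
    | cons b₂ w₂ =>
      obtain ⟨hb₁, hw₁⟩ := List.pairwise_cons.mp hv₁
      obtain ⟨hb₂, hw₂⟩ := List.pairwise_cons.mp hv₂
      rw [nfmul_cons, nfmul_cons] at h
      rcases lt_trichotomy b₁ b₂ with hlt | rfl | hgt
      · exact absurd h (cnt_contra hu hlt hb₁ hb₂)
      · rw [ih (ins_sorted hu) hw₁ hw₂ h]
      · exact absurd h.symm (cnt_contra hu hgt hb₂ hb₁)

lemma nfmul_right_cancel {d : ℕ} :
    ∀ {w u v : List ℕ}, nfmul d u w = nfmul d v w → u = v := by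
  intro w
  induction w with
  | nil => intro u v h; simpa using h
  | cons j w ih =>
    intro u v h
    rw [nfmul_cons, nfmul_cons] at h
    exact ins_injective d j (ih h)


/-! ### The Brown–Thompson monoid as sorted lists -/

def NN : Type := {l : List ℕ // List.Pairwise (· ≤ ·) l}

namespace NN

def mk (l : List ℕ) (h : List.Pairwise (· ≤ ·) l) : NN := ⟨l, h⟩

def val (a : NN) : List ℕ := Subtype.val a

lemma prop (a : NN) : List.Pairwise (· ≤ ·) a.val := a.2

@[ext] lemma ext {a b : NN} (h : a.val = b.val) : a = b := Subtype.ext h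

instance : Monoid NN where
  mul a b := mk (nfmul 2 a.val b.val) (nfmul_sorted a.prop _)
  one := mk [] List.Pairwise.nil
  mul_assoc a b c := ext (nfmul_assoc a.val b.prop c.val)
  one_mul a := ext (nfmul_of_le a.prop (fun x hx => absurd hx (List.not_mem_nil (a := x))))
  mul_one _ := rfl

lemma mul_val (a b : NN) : (a * b).val = nfmul 2 a.val b.val := rfl

lemma one_val : (1 : NN).val = [] := rfl

def single (n : ℕ) : NN := mk [n] (List.pairwise_singleton _ n)

lemma mk_nil_eq_one (h : List.Pairwise (· ≤ ·) ([] : List ℕ)) : mk [] h = 1 := rfl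

lemma mk_val (l : List ℕ) (h : List.Pairwise (· ≤ ·) l) : (mk l h).val = l := rfl

lemma single_comm {m n : ℕ} (h : m < n) :
    single n * single m = single m * single (n + 2) := by
  apply ext
  rw [mul_val, mul_val]
  show ins 2 m [n] = ins 2 (n+2) [m]
  rw [ins_cons_gt _ h, ins_cons_le _ (by omega : m ≤ n + 2)]
  simp

lemma mul_left_cancel'' {a b c : NN} (h : a * b = a * c) : b = c :=
  ext (nfmul_left_cancel a.prop b.prop c.prop (congrArg val h))

lemma mul_right_cancel'' {a b c : NN} (h : a * c = b * c) : a = b :=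
  ext (nfmul_right_cancel (d := 2) (w := c.val) (congrArg val h))

lemma cons_eq {b : ℕ} {t : List ℕ} (h : List.Pairwise (· ≤ ·) (b :: t)) :
    mk (b :: t) h = single b * mk t (List.pairwise_cons.mp h).2 := by
  apply ext
  rw [mul_val]
  show b :: t = nfmul 2 [b] t
  rw [nfmul_of_le (List.pairwise_cons.mp h).2 ?_]
  · rfl
  · intro a ha c hc
    rcases List.mem_singleton.mp ha with rfl
    exact (List.pairwise_cons.mp h).1 c hc

lemma crm_single : ∀ (l : List ℕ) (hl : List.Pairwise (· ≤ ·) l) (j : ℕ),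
    ∃ (v : NN) (k : ℕ), single j * v = mk l hl * single k := by
  intro l
  induction l with
  | nil =>
    intro h j
    exact ⟨1, j, by rw [mul_one, mk_nil_eq_one, one_mul]⟩
  | cons b t ih =>
    intro hl j
    obtain ⟨hbt, ht⟩ := List.pairwise_cons.mp hl
    rcases lt_trichotomy j b with hjb | rfl | hbj
    · refine ⟨mk ((b :: t).map (· + 2))
        (List.pairwise_map.mpr (hl.imp (fun h => by omega))), j, ?_⟩
      apply ext
      rw [mul_val, mul_val]
      show nfmul 2 [j] ((b :: t).map (· + 2)) = ins 2 j (b :: t)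
      rw [ins_cons_gt _ hjb, nfmul_of_le]
      · rfl
      · exact List.pairwise_map.mpr (hl.imp (fun h => by omega))
      · intro a ha c hc
        rcases List.mem_singleton.mp ha with rfl
        rcases List.mem_map.mp hc with ⟨e, he, rfl⟩
        have : b ≤ e := by
          rcases List.mem_cons.mp he with rfl | he
          · exact le_refl _
          · exact hbt e he
        omega
    · refine ⟨mk t ht * single j, j, ?_⟩
      rw [← mul_assoc, cons_eq hl]
    · obtain ⟨v, k, hv⟩ := ih ht (j + 2)
      refine ⟨single b * v, k, ?_⟩
      rw [← mul_assoc, single_comm hbj, mul_assoc, hv, ← mul_assoc, ← cons_eq hl]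

lemma crm_aux : ∀ (m : List ℕ) (hm : List.Pairwise (· ≤ ·) m) (u : NN),
    ∃ a b : NN, u * a = mk m hm * b := by
  intro m
  induction m with
  | nil =>
    intro hm u
    exact ⟨1, u, by rw [mul_one, mk_nil_eq_one, one_mul]⟩
  | cons j t ih =>
    intro hm u
    obtain ⟨v, k, hv⟩ := crm_single u.val u.prop j
    obtain ⟨c, b', hc⟩ := ih (List.pairwise_cons.mp hm).2 v
    refine ⟨single k * c, b', ?_⟩
    have hu : mk u.val u.prop = u := rfl
    rw [hu] at hv
    rw [← mul_assoc, ← hv, mul_assoc, hc, ← mul_assoc, ← cons_eq hm]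

lemma crm (u s : NN) : ∃ a b : NN, u * a = s * b := crm_aux s.val s.prop u

end NN

/-! ### Ore localization: the Brown–Thompson group of fractions -/

open MulOpposite

noncomputable instance : OreLocalization.OreSet (⊤ : Submonoid NNᵐᵒᵖ) where
  ore_right_cancel r₁ r₂ s h := by
    refine ⟨1, ?_⟩
    have h' : unop (s : NNᵐᵒᵖ) * unop r₁ = unop (s : NNᵐᵒᵖ) * unop r₂ := by
      have := congrArg unop h
      simpa [unop_mul] using this
    simp only [OneMemClass.coe_one, one_mul]
    exact unop_injective (NN.mul_left_cancel'' h')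
  oreNum r s := op (NN.crm (unop r) (unop (s : NNᵐᵒᵖ))).choose_spec.choose
  oreDenom r s := ⟨op (NN.crm (unop r) (unop (s : NNᵐᵒᵖ))).choose, Submonoid.mem_top _⟩
  ore_eq r s := by
    have h := (NN.crm (unop r) (unop (s : NNᵐᵒᵖ))).choose_spec.choose_spec
    apply unop_injective
    simpa [unop_mul] using h

/-- The Brown–Thompson group of fractions. -/
abbrev Loc : Type := OreLocalization (⊤ : Submonoid NNᵐᵒᵖ) NNᵐᵒᵖ

noncomputable instance : Group Loc :=
  { (inferInstance : Monoid Loc) with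
    inv := OreLocalization.liftExpand
      (fun (r : NNᵐᵒᵖ) (s : (⊤ : Submonoid NNᵐᵒᵖ)) =>
        ((s : NNᵐᵒᵖ) /ₒ ⟨r, Submonoid.mem_top r⟩ : Loc))
      (by
        intro r t s ht
        have := OreLocalization.expand (X := NNᵐᵒᵖ) (s : NNᵐᵒᵖ) ⟨r, Submonoid.mem_top r⟩ t
          (Submonoid.mem_top (t * r))
        simpa only [smul_eq_mul] using this)
    inv_mul_cancel := fun a => by
      induction a using OreLocalization.ind with
      | _ r s =>
        show ((s : NNᵐᵒᵖ) /ₒ ⟨r, Submonoid.mem_top r⟩ : Loc) * (r /ₒ s) = 1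
        rw [OreLocalization.mul_cancel]
        exact OreLocalization.div_eq_one' (Submonoid.mem_top r) }

/-- The embedding of the monoid into (the opposite of) its group of fractions. -/
noncomputable def nu : NN →* (MulOpposite Loc) where
  toFun u := op (OreLocalization.numeratorHom (op u))
  map_one' := by rw [op_one, map_one, op_one]
  map_mul' a b := by
    simp only [op_mul, map_mul]

lemma nu_injective : Function.Injective nu := by
  intro a b h
  have h1 : OreLocalization.numeratorHom (op a) = OreLocalization.numeratorHom (op b) :=
    op_injective h
  rw [OreLocalization.numeratorHom_apply, OreLocalization.numeratorHom_apply,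
    OreLocalization.oreDiv_eq_iff] at h1
  obtain ⟨u, v, h2, h3⟩ := h1
  have huv : (u : NNᵐᵒᵖ) = v := by simpa using h3
  rw [← huv] at h2
  have h4 : b * unop (u : NNᵐᵒᵖ) = a * unop (u : NNᵐᵒᵖ) := by
    have := congrArg unop h2
    simpa [smul_eq_mul, unop_mul, Submonoid.smul_def, MulOpposite.smul_eq_mul_unop] using this
  exact (NN.mul_right_cancel'' h4).symm

/-! ### The homomorphism from `F₃` to the group of fractions -/

noncomputable def fy : ℕ → MulOpposite Loc := fun n => nu (NN.single n)

lemma relcheck3 : ∀ r ∈ relsF3, FreeGroup.lift fy r = 1 := by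
  rintro r ⟨m, n, hmn, rfl⟩
  rw [map_mul, map_inv, map_mul, map_mul]
  simp only [FreeGroup.lift_apply_of]
  rw [mul_inv_eq_one]
  show fy n * fy m = fy m * fy (n+2)
  unfold fy
  rw [← map_mul, ← map_mul, NN.single_comm hmn]

noncomputable def beta : GF3 →* MulOpposite Loc := PresentedGroup.toGroup relcheck3

lemma beta_Y (n : ℕ) : beta (Y n) = nu (NN.single n) := PresentedGroup.toGroup.of relcheck3

def prodY (w : List ℕ) : GF3 := (w.map Y).prod

@[simp] lemma prodY_nil : prodY [] = 1 := rfl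

lemma prodY_append (w₁ w₂ : List ℕ) : prodY (w₁ ++ w₂) = prodY w₁ * prodY w₂ := by
  simp [prodY]

lemma nf_sorted (w : List ℕ) : List.Pairwise (· ≤ ·) (nfmul 2 [] w) :=
  nfmul_sorted List.Pairwise.nil w

lemma beta_prodY (w : List ℕ) : beta (prodY w) = nu (NN.mk (nfmul 2 [] w) (nf_sorted w)) := by
  induction w using List.reverseRecOn with
  | nil =>
    rw [prodY_nil, map_one, show NN.mk (nfmul 2 [] []) (nf_sorted []) = 1 from rfl, map_one]
  | append_singleton w j ih =>
    rw [prodY_append, map_mul, ih]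
    have h1 : prodY [j] = Y j := by simp [prodY]
    rw [h1, beta_Y, ← map_mul]
    congr 1
    apply NN.ext
    rw [NN.mul_val]
    show nfmul 2 (nfmul 2 [] w) [j] = nfmul 2 [] (w ++ [j])
    rw [nfmul_append]

lemma prodY_inj {w₁ w₂ : List ℕ} (h : prodY w₁ = prodY w₂) :
    nfmul 2 [] w₁ = nfmul 2 [] w₂ := by
  have h2 := congrArg beta h
  rw [beta_prodY, beta_prodY] at h2
  exact congrArg NN.val (nu_injective h2)

/-! ### Doubling: relating shift-1 and shift-2 insertion -/

lemma ins_double (j : ℕ) (l : List ℕ) :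
    ins 2 (2*j) (l.map (fun x => 2*x)) = (ins 1 j l).map (fun x => 2*x) := by
  induction l with
  | nil => simp
  | cons a l ih =>
    by_cases h : a ≤ j
    · rw [List.map_cons, ins_cons_le _ (by omega : 2*a ≤ 2*j), ins_cons_le _ h,
        List.map_cons, ih]
    · rw [List.map_cons, ins_cons_gt _ (by omega : 2*j < 2*a),
        ins_cons_gt _ (by omega : j < a)]
      have hc : ((fun x => x + 2) ∘ (fun x : ℕ => 2*x)) = ((fun x : ℕ => 2*x) ∘ (fun x => x + 1)) := by
        funext x; simp only [Function.comp_apply]; omega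
      rw [List.map_cons, List.map_cons, List.map_cons, List.map_map]
      rw [List.map_cons, List.map_map, ← hc, Nat.mul_succ]

lemma nf_double (w : List ℕ) : ∀ l : List ℕ,
    nfmul 2 (l.map (fun x => 2*x)) (w.map (fun x => 2*x))
      = (nfmul 1 l w).map (fun x => 2*x) := by
  induction w with
  | nil => intro l; rfl
  | cons j w ih =>
    intro l
    rw [List.map_cons, nfmul_cons, nfmul_cons, ins_double, ih]


/-! ### Thompson's group `F` as a presented group -/

abbrev GF : Type := PresentedGroup relsF

def aa : GF := PresentedGroup.of 0
def bb : GF := PresentedGroup.of 1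

def X : ℕ → GF
  | 0 => aa
  | 1 => bb
  | (n+2) => aa⁻¹ * X (n+1) * aa

lemma X_zero : X 0 = aa := rfl

lemma X_succ {n : ℕ} (h : 1 ≤ n) : X (n+1) = aa⁻¹ * X n * aa := by
  match n, h with
  | (n+1), _ => rfl

lemma relF_mem {r : FreeGroup (Fin 2)} (hr : r ∈ relsF) : PresentedGroup.mk relsF r = 1 :=
  (QuotientGroup.eq_one_iff _).mpr (Subgroup.subset_normalClosure hr)

def pi (m : ℕ) : GF := aa * (X m)⁻¹

lemma commute_conj {G : Type*} [Group G] {x y g : G} (h : Commute x y) :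
    Commute (g⁻¹ * x * g) (g⁻¹ * y * g) := by
  have h1 : (g⁻¹ * x * g) * (g⁻¹ * y * g) = g⁻¹ * (x * y) * g := by group
  have h2 : (g⁻¹ * y * g) * (g⁻¹ * x * g) = g⁻¹ * (y * x) * g := by group
  show (g⁻¹ * x * g) * (g⁻¹ * y * g) = (g⁻¹ * y * g) * (g⁻¹ * x * g)
  rw [h1, h2, h.eq]

lemma conj_of_commute {G : Type*} [Group G] {x q g : G} (h : Commute (g * q⁻¹) x) :
    q⁻¹ * x * q = g⁻¹ * x * g := by
  have h2 : g * (q⁻¹ * x * q) = g * (g⁻¹ * x * g) := by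
    calc g * (q⁻¹ * x * q) = ((g * q⁻¹) * x) * q := by group
      _ = (x * (g * q⁻¹)) * q := by rw [h.eq]
      _ = x * g := by group
      _ = g * (g⁻¹ * x * g) := by group
  exact mul_left_cancel h2

lemma comm_base1 : Commute (pi 1) (X 2) := by
  have hmem : (⁅(FreeGroup.of 0 : FreeGroup (Fin 2)) * (FreeGroup.of 1)⁻¹,
      (FreeGroup.of 0)⁻¹ * FreeGroup.of 1 * FreeGroup.of 0⁆) ∈ relsF := Set.mem_insert _ _
  have h1 := relF_mem hmem
  rw [map_commutatorElement] at h1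
  have h2 := commutatorElement_eq_one_iff_commute.mp h1
  simp only [map_mul, map_inv] at h2
  exact h2

lemma comm_base2 : Commute (pi 1) (X 3) := by
  have hmem : (⁅(FreeGroup.of 0 : FreeGroup (Fin 2)) * (FreeGroup.of 1)⁻¹,
      (FreeGroup.of 0)⁻¹ * (FreeGroup.of 0)⁻¹ * FreeGroup.of 1 * FreeGroup.of 0 *
        FreeGroup.of 0⁆) ∈ relsF := Set.mem_insert_of_mem _ rfl
  have h1 := relF_mem hmem
  rw [map_commutatorElement] at h1
  have h2 := commutatorElement_eq_one_iff_commute.mp h1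
  simp only [map_mul, map_inv] at h2
  have h3 : (PresentedGroup.mk relsF (FreeGroup.of 0))⁻¹ * (PresentedGroup.mk relsF (FreeGroup.of 0))⁻¹ *
      PresentedGroup.mk relsF (FreeGroup.of 1) * PresentedGroup.mk relsF (FreeGroup.of 0) *
      PresentedGroup.mk relsF (FreeGroup.of 0) = X 3 := by
    show aa⁻¹ * aa⁻¹ * bb * aa * aa = aa⁻¹ * (aa⁻¹ * bb * aa) * aa
    group
  rw [h3] at h2
  exact h2

lemma conj_X {n : ℕ} (h : 1 ≤ n) : aa⁻¹ * X n * aa = X (n+1) := (X_succ h).symm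

lemma conj_pi {m : ℕ} (h : 1 ≤ m) : aa⁻¹ * pi m * aa = pi (m+1) := by
  rw [pi, pi, X_succ h]
  group

lemma comm_base {c : ℕ} (hc : Commute (pi 1) (X (c+2))) :
    ∀ m, 1 ≤ m → Commute (pi m) (X (m+c+1)) := by
  intro m
  induction m with
  | zero => intro h; omega
  | succ m ih =>
    intro _
    rcases Nat.eq_zero_or_pos m with rfl | hm
    · have : 0 + 1 + c + 1 = c + 2 := by omega
      rw [this]
      exact hc
    · have h' := commute_conj (g := aa) (ih hm)
      rw [conj_pi hm, conj_X (by omega)] at h'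
      have : m + 1 + c + 1 = m + c + 1 + 1 := by omega
      rw [this]
      exact h'

lemma comm_main : ∀ d m, 1 ≤ m → Commute (pi m) (X (m + d + 1)) := by
  intro d
  induction d using Nat.strong_induction_on with
  | _ d ih =>
    match d with
    | 0 => exact comm_base (by simpa using comm_base1)
    | 1 => exact comm_base (by simpa using comm_base2)
    | (e+2) =>
      intro m hm
      have h0 : Commute (pi m) (X (m+1)) := by
        have := ih 0 (by omega) m hm
        simpa using this
      have h1 : Commute (pi (m+1)) (X (m+e+2)) := by
        have := ih e (by omega) (m+1) (by omega)
        have hidx : m + 1 + e + 1 = m + e + 2 := by omega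
        rwa [hidx] at this
      have h2 : Commute (pi m) (X (m+e+2)) := by
        have := ih (e+1) (by omega) m hm
        have hidx : m + (e+1) + 1 = m + e + 2 := by omega
        rwa [hidx] at this
      have key : (X (m+1))⁻¹ * X (m+e+2) * (X (m+1)) = X (m+e+3) := by
        have hcc : Commute (aa * (X (m+1))⁻¹) (X (m+e+2)) := h1
        rw [conj_of_commute hcc]
        exact conj_X (by omega)
      have hidx2 : m + (e + 2) + 1 = m + e + 3 := by omega
      rw [hidx2, ← key]
      exact ((h0.inv_right.mul_right h2).mul_right h0)

lemma L1 {m n : ℕ} (h : m < n) : (X m)⁻¹ * X n * X m = X (n+1) := by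
  cases m with
  | zero => exact conj_X (by omega)
  | succ m =>
    have hc := comm_main (n - m - 2) (m+1) (by omega)
    have hidx : m + 1 + (n - m - 2) + 1 = n := by omega
    rw [hidx] at hc
    have hcc : Commute (aa * (X (m+1))⁻¹) (X n) := hc
    rw [conj_of_commute hcc]
    exact conj_X (by omega)

lemma XX {i j : ℕ} (h : i < j) : X j * X i = X i * X (j+1) := by
  rw [← L1 h]
  group

lemma swap_inv {G : Type*} [Group G] {a b c : G} (h : a * b = b * c) :
    a⁻¹ * b = b * c⁻¹ := by
  calc a⁻¹ * b = a⁻¹ * (b * c) * c⁻¹ := by group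
    _ = a⁻¹ * (a * b) * c⁻¹ := by rw [h]
    _ = b * c⁻¹ := by group

lemma Xinv_left {i j : ℕ} (h : i < j) : (X j)⁻¹ * X i = X i * (X (j+1))⁻¹ :=
  swap_inv (XX h)

lemma Xinv_right {i j : ℕ} (h : j < i) : (X j)⁻¹ * X i = X (i+1) * (X j)⁻¹ := by
  rw [← L1 h]
  group

/-- products of positive generators -/
def P (w : List ℕ) : GF := (w.map X).prod

@[simp] lemma P_nil : P [] = 1 := rfl

lemma P_cons (j : ℕ) (w : List ℕ) : P (j :: w) = X j * P w := by simp [P]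

lemma P_append (w₁ w₂ : List ℕ) : P (w₁ ++ w₂) = P w₁ * P w₂ := by simp [P]

lemma move : ∀ (q : List ℕ) (i : ℕ), ∃ p r : List ℕ, (P q)⁻¹ * X i = P p * (P r)⁻¹ := by
  intro q
  induction q with
  | nil => intro i; exact ⟨[i], [], by simp [P_cons]⟩
  | cons j q ih =>
    intro i
    have hsplit : (P (j :: q))⁻¹ * X i = (P q)⁻¹ * ((X j)⁻¹ * X i) := by
      rw [P_cons]; group
    rcases lt_trichotomy i j with hij | rfl | hji
    · obtain ⟨p, r, hpr⟩ := ih i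
      refine ⟨p, (j+1) :: r, ?_⟩
      rw [hsplit, Xinv_left hij, ← mul_assoc, hpr, P_cons, mul_inv_rev, mul_assoc]
    · refine ⟨[], q, ?_⟩
      rw [hsplit]
      simp
    · obtain ⟨p, r, hpr⟩ := ih (i+1)
      refine ⟨p, j :: r, ?_⟩
      rw [hsplit, Xinv_right hji, ← mul_assoc, hpr, P_cons, mul_inv_rev, mul_assoc]

lemma move' : ∀ (p₂ r₁ : List ℕ), ∃ p r : List ℕ, (P r₁)⁻¹ * P p₂ = P p * (P r)⁻¹ := by
  intro p₂
  induction p₂ with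
  | nil => intro r₁; exact ⟨[], r₁, by simp⟩
  | cons j p₂ ih =>
    intro r₁
    obtain ⟨p, r, hpr⟩ := move r₁ j
    obtain ⟨p', r', hpr'⟩ := ih r
    refine ⟨p ++ p', r', ?_⟩
    rw [P_cons, ← mul_assoc, hpr, mul_assoc, hpr', P_append, mul_assoc]

def fracSet : Subgroup GF where
  carrier := {g | ∃ p r : List ℕ, g = P p * (P r)⁻¹}
  one_mem' := ⟨[], [], by simp⟩
  mul_mem' := by
    rintro g₁ g₂ ⟨p₁, r₁, rfl⟩ ⟨p₂, r₂, rfl⟩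
    obtain ⟨p, r, hpr⟩ := move' p₂ r₁
    refine ⟨p₁ ++ p, r₂ ++ r, ?_⟩
    rw [P_append, P_append, mul_inv_rev]
    calc P p₁ * (P r₁)⁻¹ * (P p₂ * (P r₂)⁻¹)
        = P p₁ * ((P r₁)⁻¹ * P p₂) * (P r₂)⁻¹ := by group
      _ = P p₁ * (P p * (P r)⁻¹) * (P r₂)⁻¹ := by rw [hpr]
      _ = P p₁ * P p * ((P r)⁻¹ * (P r₂)⁻¹) := by group
  inv_mem' := by
    rintro g ⟨p, r, rfl⟩
    exact ⟨r, p, by rw [mul_inv_rev, inv_inv]⟩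

lemma frac (g : GF) : ∃ p r : List ℕ, g = P p * (P r)⁻¹ := by
  refine PresentedGroup.generated_by relsF fracSet ?_ g
  intro j
  fin_cases j
  · exact ⟨[0], [], by rw [P_cons]; simp; rfl⟩
  · exact ⟨[1], [], by rw [P_cons]; simp; rfl⟩

/-! ### The homomorphism `F → F₃` -/

def fh : Fin 2 → GF3 := fun i => Y (2 * (i : ℕ))

lemma Ycomm {n : ℕ} (hn : 2 < n) : Commute (Y 0 * (Y 2)⁻¹) (Y n) := by
  have h1 : (Y 2)⁻¹ * Y n = Y (n+2) * (Y 2)⁻¹ := by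
    rw [← Yconj hn]; group
  have h2 : Y n * Y 0 = Y 0 * Y (n+2) := Yrel (by omega)
  show (Y 0 * (Y 2)⁻¹) * Y n = Y n * (Y 0 * (Y 2)⁻¹)
  calc Y 0 * (Y 2)⁻¹ * Y n = Y 0 * ((Y 2)⁻¹ * Y n) := by group
    _ = Y 0 * (Y (n+2) * (Y 2)⁻¹) := by rw [h1]
    _ = (Y 0 * Y (n+2)) * (Y 2)⁻¹ := by group
    _ = (Y n * Y 0) * (Y 2)⁻¹ := by rw [← h2]
    _ = Y n * (Y 0 * (Y 2)⁻¹) := by group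

lemma relcheckF : ∀ r ∈ relsF, FreeGroup.lift fh r = 1 := by
  intro r hr
  rcases hr with rfl | rfl
  · rw [map_commutatorElement]
    apply commutatorElement_eq_one_iff_commute.mpr
    simp only [map_mul, map_inv, FreeGroup.lift_apply_of]
    have hfh0 : fh 0 = Y 0 := rfl
    have hfh1 : fh 1 = Y 2 := rfl
    rw [hfh0, hfh1]
    have h4 : (Y 0)⁻¹ * Y 2 * Y 0 = Y 4 := Yconj (by omega)
    rw [h4]
    exact Ycomm (by omega)
  · rw [map_commutatorElement]
    apply commutatorElement_eq_one_iff_commute.mpr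
    simp only [map_mul, map_inv, FreeGroup.lift_apply_of]
    have hfh0 : fh 0 = Y 0 := rfl
    have hfh1 : fh 1 = Y 2 := rfl
    rw [hfh0, hfh1]
    have h4 : (Y 0)⁻¹ * Y 2 * Y 0 = Y 4 := Yconj (by omega)
    have h6 : (Y 0)⁻¹ * Y 4 * Y 0 = Y 6 := Yconj (by omega)
    have h46 : (Y 0)⁻¹ * (Y 0)⁻¹ * Y 2 * Y 0 * Y 0 = Y 6 := by
      rw [← h6, ← h4]; group
    rw [h46]
    exact Ycomm (by omega)

def hmap : GF →* GF3 := PresentedGroup.toGroup relcheckF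

lemma hmap_aa : hmap aa = Y 0 := PresentedGroup.toGroup.of relcheckF

lemma hmap_bb : hmap bb = Y 2 := PresentedGroup.toGroup.of relcheckF

lemma hmap_X : ∀ n : ℕ, hmap (X n) = Y (2*n) := by
  intro n
  induction n using Nat.strong_induction_on with
  | _ n ih =>
    match n with
    | 0 => exact hmap_aa
    | 1 => exact hmap_bb
    | (k+2) =>
      show hmap (aa⁻¹ * X (k+1) * aa) = Y (2*(k+2))
      rw [map_mul, map_mul, map_inv, hmap_aa, ih (k+1) (by omega)]
      have h := Yconj (show 0 < 2*(k+1) by omega)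
      have hidx : 2*(k+1) + 2 = 2*(k+2) := by omega
      rw [h, hidx]

lemma prodY_cons (j : ℕ) (w : List ℕ) : prodY (j :: w) = Y j * prodY w := by simp [prodY]

lemma hmap_P (w : List ℕ) : hmap (P w) = prodY (w.map (fun x => 2*x)) := by
  induction w with
  | nil => simp [P, prodY]
  | cons j w ih =>
    rw [P_cons, map_mul, ih, hmap_X, List.map_cons, prodY_cons]

/-! ### Normal forms for positive words in `F` -/

lemma P_shift {j : ℕ} : ∀ {l : List ℕ}, (∀ b ∈ l, j < b) →
    P l * X j = X j * P (l.map (· + 1)) := by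
  intro l
  induction l with
  | nil => intro _; simp
  | cons b l ih =>
    intro hb
    have hjb : j < b := hb b (by simp)
    rw [P_cons, List.map_cons, P_cons]
    calc (X b * P l) * X j = X b * (P l * X j) := by group
      _ = X b * (X j * P (l.map (· + 1))) := by
          rw [ih (fun c hc => hb c (List.mem_cons_of_mem _ hc))]
      _ = (X b * X j) * P (l.map (· + 1)) := by group
      _ = (X j * X (b+1)) * P (l.map (· + 1)) := by rw [XX hjb]
      _ = X j * (X (b+1) * P (l.map (· + 1))) := by group

lemma P_ins {l : List ℕ} (hl : List.Pairwise (· ≤ ·) l) (j : ℕ) :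
    P l * X j = P (ins 1 j l) := by
  induction l with
  | nil => simp [P_cons]
  | cons b l ih =>
    obtain ⟨hb, hl'⟩ := List.pairwise_cons.mp hl
    by_cases hbj : b ≤ j
    · rw [ins_cons_le _ hbj, P_cons, P_cons, mul_assoc, ih hl']
    · have hj : ∀ c ∈ b :: l, j < c := by
        intro c hc
        rcases List.mem_cons.mp hc with rfl | hc
        · omega
        · exact lt_of_lt_of_le (by omega) (hb c hc)
      rw [ins_cons_gt _ (by omega), P_cons]
      exact P_shift hj

lemma P_nf : ∀ (w l : List ℕ), List.Pairwise (· ≤ ·) l → P l * P w = P (nfmul 1 l w) := by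
  intro w
  induction w with
  | nil => intro l _; simp
  | cons j w ih =>
    intro l hl
    rw [P_cons, nfmul_cons, ← ih (ins 1 j l) (ins_sorted hl), ← mul_assoc, P_ins hl]

lemma P_eq_nf (w : List ℕ) : P w = P (nfmul 1 [] w) := by
  have := P_nf w [] List.Pairwise.nil
  simpa using this

lemma hmap_injective : Function.Injective hmap := by
  refine (injective_iff_map_eq_one hmap).mpr ?_
  intro g hg
  obtain ⟨p, r, rfl⟩ := frac g
  have h1 : hmap (P p) = hmap (P r) := by
    have h0 : hmap (P p) * (hmap (P r))⁻¹ = 1 := by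
      rw [← map_inv, ← map_mul]; exact hg
    exact mul_inv_eq_one.mp h0
  rw [hmap_P, hmap_P] at h1
  have h2 := prodY_inj h1
  have h3 : (nfmul 1 [] p).map (fun x => 2*x) = (nfmul 1 [] r).map (fun x => 2*x) := by
    rw [← nf_double p [], ← nf_double r []]
    exact h2
  have h4 : nfmul 1 [] p = nfmul 1 [] r :=
    List.map_injective_iff.mpr (fun a b hab => by omega) h3
  rw [P_eq_nf p, P_eq_nf r, h4]
  simp

end ThompsonEmbed

/-- the assignment `x₀ ↦ y₀`, `x₁ ↦ y₂` extends to a well-defined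
injective group homomorphism from Thompson's group `F` to the Brown–Thompson
group `F₃`. -/
theorem F_embeds_in_F3 :
    ∃ h : PresentedGroup relsF →* PresentedGroup relsF3,
      Function.Injective h ∧
      h (PresentedGroup.of 0) = PresentedGroup.of 0 ∧
      h (PresentedGroup.of 1) = PresentedGroup.of 2 := by
  refine ⟨ThompsonEmbed.hmap, ThompsonEmbed.hmap_injective, ?_, ?_⟩
  · exact ThompsonEmbed.hmap_aa
  · exact ThompsonEmbed.hmap_bb
end
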